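/- arXiv:math/9308203 — 13 statements merged into one kernel-verified Lean document; each statement's English description precedes it below -/
import Mathlib

section
/- Every proper pleasant ideal on a regular uncountable cardinal κ is subnormal: the ideal generated by I ∪ NS_κ is a proper normal ideal extending I. -/
open Set

namespace PaperIdeals

/-- Diagonal union of a family `X` indexed by a set `A` of ordinals. -/
def diagU (A : Set Ordinal.{0}) (X : Ordinal.{0} → Set Ordinal.{0}) : Set Ordinal.{0} :=
  {ξ | ∃ α < ξ, α ∈ A ∧ ξ ∈ X α}

/-- `X` is bounded below `κ`. -/
def BddIn (κ : Cardinal.{0}) (X : Set Ordinal.{0}) : Prop := ∃ θ < κ.ord, X ⊆ Iio θ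

/-- `J` is a `<κ`-complete ideal on `κ` containing all singletons,
closed under subsets and (finite and small) unions. -/
def IsIdeal (κ : Cardinal.{0}) (J : Set Ordinal.{0} → Prop) : Prop :=
  (∀ X, J X → X ⊆ Iio κ.ord) ∧
  (∀ X Y, J X → Y ⊆ X → J Y) ∧
  (∀ X Y, J X → J Y → J (X ∪ Y)) ∧
  (∀ ξ < κ.ord, J {ξ}) ∧
  (∀ θ : Ordinal.{0}, θ.card < κ → ∀ X : Ordinal.{0} → Set Ordinal.{0},
    (∀ α, J (X α)) → J (⋃ α ∈ Iio θ, X α))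

def Proper (κ : Cardinal.{0}) (J : Set Ordinal.{0} → Prop) : Prop := ¬ J (Iio κ.ord)

/-- The coideal `I⁺`. -/
def Pos (κ : Cardinal.{0}) (J : Set Ordinal.{0} → Prop) (X : Set Ordinal.{0}) : Prop :=
  X ⊆ Iio κ.ord ∧ ¬ J X

/-- The dual filter `I*`. -/
def Dual (κ : Cardinal.{0}) (J : Set Ordinal.{0} → Prop) (X : Set Ordinal.{0}) : Prop :=
  X ⊆ Iio κ.ord ∧ J (Iio κ.ord \ X)

/-- The restriction `I ↾ A`. -/
def restrict (κ : Cardinal.{0}) (J : Set Ordinal.{0} → Prop) (A : Set Ordinal.{0})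
    (X : Set Ordinal.{0}) : Prop :=
  X ⊆ Iio κ.ord ∧ J (X ∩ A)

/-- Pleasant: closed under diagonal unions indexed by sets in the ideal. -/
def Pleasant (J : Set Ordinal.{0} → Prop) : Prop :=
  ∀ A, J A → ∀ X : Ordinal.{0} → Set Ordinal.{0}, (∀ α, J (X α)) → J (diagU A X)

/-- Prepleasant: closed under diagonal unions of bounded sets indexed by sets in the ideal. -/
def Prepleasant (κ : Cardinal.{0}) (J : Set Ordinal.{0} → Prop) : Prop :=
  ∀ Q, J Q → ∀ B : Ordinal.{0} → Set Ordinal.{0}, (∀ α, BddIn κ (B α)) → J (diagU Q B)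

/-- Normal: closed under full `κ`-indexed diagonal unions. -/
def Normal (κ : Cardinal.{0}) (J : Set Ordinal.{0} → Prop) : Prop :=
  ∀ X : Ordinal.{0} → Set Ordinal.{0}, (∀ α, J (X α)) → J (diagU (Iio κ.ord) X)

/-- Quasinormal ideal. -/
def Quasinormal (κ : Cardinal.{0}) (J : Set Ordinal.{0} → Prop) : Prop :=
  ∀ X : Ordinal.{0} → Set Ordinal.{0}, (∀ α, J (X α)) →
    ∃ Q, Dual κ J Q ∧ J (diagU Q X)

/-- Club subset of `κ`: unbounded in `κ.ord` and closed under limits. -/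
def IsClubIn (κ : Cardinal.{0}) (C : Set Ordinal.{0}) : Prop :=
  C ⊆ Iio κ.ord ∧ (∀ α < κ.ord, ∃ β ∈ C, α < β) ∧
  (∀ δ < κ.ord, Order.IsSuccLimit δ → (∀ α < δ, ∃ β ∈ C, α < β ∧ β < δ) → δ ∈ C)

/-- Stationary subset of `κ`. -/
def StatIn (κ : Cardinal.{0}) (S : Set Ordinal.{0}) : Prop :=
  S ⊆ Iio κ.ord ∧ ∀ C, IsClubIn κ C → (S ∩ C).Nonempty

/-- The nonstationary ideal `NS κ`. -/
def NS (κ : Cardinal.{0}) (X : Set Ordinal.{0}) : Prop :=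
  X ⊆ Iio κ.ord ∧ ∃ C, IsClubIn κ C ∧ X ∩ C = ∅

/-- Membership in the ideal generated by a family `S`. -/
def genIdeal (κ : Cardinal.{0}) (S : Set Ordinal.{0} → Prop) (X : Set Ordinal.{0}) : Prop :=
  ∀ K, IsIdeal κ K → (∀ Y, S Y → K Y) → K X

/-- Membership in the pleasant closure of `S` (smallest pleasant ideal containing `S`). -/
def PClosure (κ : Cardinal.{0}) (S : Set Ordinal.{0} → Prop) (X : Set Ordinal.{0}) : Prop :=
  ∀ K, IsIdeal κ K → Pleasant K → (∀ Y, S Y → K Y) → K X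

/-- Membership in the prepleasant closure of `S`. -/
def PPClosure (κ : Cardinal.{0}) (S : Set Ordinal.{0} → Prop) (X : Set Ordinal.{0}) : Prop :=
  ∀ K, IsIdeal κ K → Prepleasant κ K → (∀ Y, S Y → K Y) → K X

/-- p-point. -/
def PPoint (κ : Cardinal.{0}) (J : Set Ordinal.{0} → Prop) : Prop :=
  ∀ f : Ordinal.{0} → Ordinal.{0}, (∀ ξ : Ordinal.{0}, J {α | α < κ.ord ∧ f α = ξ}) →
    ∃ X, Dual κ J X ∧ ∀ ξ : Ordinal.{0}, BddIn κ {α | α ∈ X ∧ f α = ξ}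

/-- q-point. -/
def QPoint (κ : Cardinal.{0}) (J : Set Ordinal.{0} → Prop) : Prop :=
  ∀ f : Ordinal.{0} → Ordinal.{0}, (∀ ξ : Ordinal.{0}, BddIn κ {α | α < κ.ord ∧ f α = ξ}) →
    ∃ X, Dual κ J X ∧ Set.InjOn f X

/-- `L = {λ + 1 : λ < κ a limit ordinal}`. -/
def LSet (κ : Cardinal.{0}) : Set Ordinal.{0} :=
  {x | ∃ lam : Ordinal.{0}, Order.IsSuccLimit lam ∧ x = lam + 1 ∧ x < κ.ord}

/-- `B(Y) = {α - 1 : α ∈ Y}` for a set `Y` of successor ordinals. -/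
def BSet (Y : Set Ordinal.{0}) : Set Ordinal.{0} := {γ | γ + 1 ∈ Y}

/-- `W = {λ < κ : cof λ = ω}`. -/
def WSet (κ : Cardinal.{0}) : Set Ordinal.{0} :=
  {lam | lam < κ.ord ∧ lam.cof = Cardinal.aleph0}

/-- Węglorz's ideal `J_κ`. -/
def Weglorz (κ : Cardinal.{0}) (X : Set Ordinal.{0}) : Prop :=
  X ⊆ Iio κ.ord ∧ ∃ (f : Ordinal.{0} → Ordinal.{0}) (θ : Cardinal.{0}), θ < κ ∧
    (∀ α ∈ X, α ≠ 0 → f α < α) ∧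
    ∀ ξ : Ordinal.{0}, Cardinal.mk {α : Ordinal.{0} // α ∈ X ∧ f α = ξ} ≤ Cardinal.lift.{1} θ

section Aux
variable {κ : Cardinal.{0}} {J : Set Ordinal.{0} → Prop}

lemma aux_ordPos (hunc : Cardinal.aleph0 < κ) : (0 : Ordinal) < κ.ord := by
  rw [Cardinal.lt_ord]
  simpa using Cardinal.aleph0_pos.trans hunc

lemma aux_ordLim (hunc : Cardinal.aleph0 < κ) : Order.IsSuccLimit κ.ord :=
  Cardinal.isSuccLimit_ord hunc.le

lemma aux_succ_lt (hunc : Cardinal.aleph0 < κ) {a : Ordinal} (h : a < κ.ord) :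
    a + 1 < κ.ord := by
  have := (aux_ordLim hunc).succ_lt h
  rwa [Ordinal.add_one_eq_succ]

lemma aux_J_empty (hunc : Cardinal.aleph0 < κ) (hJ : IsIdeal κ J) : J ∅ :=
  hJ.2.1 _ _ (hJ.2.2.2.1 0 (aux_ordPos hunc)) (empty_subset _)

lemma aux_J_Iio (hunc : Cardinal.aleph0 < κ) (hJ : IsIdeal κ J) {θ : Ordinal}
    (hθ : θ < κ.ord) : J (Iio θ) := by
  have hEq : Iio θ = ⋃ α ∈ Iio θ, (fun α => if α < κ.ord then {α} else (∅ : Set Ordinal)) α := by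
    ext ξ
    simp only [mem_iUnion, mem_Iio]
    constructor
    · intro hξ
      exact ⟨ξ, hξ, by simp [if_pos (hξ.trans hθ)]⟩
    · rintro ⟨α, hα, hmem⟩
      by_cases h : α < κ.ord
      · rw [if_pos h] at hmem
        rw [mem_singleton_iff] at hmem
        exact hmem ▸ hα
      · rw [if_neg h] at hmem
        exact absurd hmem (notMem_empty ξ)
  rw [hEq]
  refine hJ.2.2.2.2 θ (Cardinal.lt_ord.mp hθ) _ fun α => ?_
  by_cases h : α < κ.ord
  · rw [if_pos h]; exact hJ.2.2.2.1 α h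
  · rw [if_neg h]; exact aux_J_empty hunc hJ

lemma aux_J_bdd (hunc : Cardinal.aleph0 < κ) (hJ : IsIdeal κ J) {θ : Ordinal}
    (hθ : θ < κ.ord) {X : Set Ordinal} (hX : X ⊆ Iio θ) : J X :=
  hJ.2.1 _ _ (aux_J_Iio hunc hJ hθ) hX

/-- Least element of `A` above `β`. -/
noncomputable def nxt (A : Set Ordinal.{0}) (β : Ordinal.{0}) : Ordinal.{0} :=
  sInf {c | c ∈ A ∧ β < c}

lemma nxt_spec {A : Set Ordinal.{0}} (hsub : A ⊆ Iio κ.ord)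
    (hA : ∀ α < κ.ord, ∃ a ∈ A, α < a) {β : Ordinal} (hβ : β < κ.ord) :
    nxt A β ∈ A ∧ β < nxt A β ∧ nxt A β < κ.ord := by
  obtain ⟨a, ha, hlt⟩ := hA β hβ
  have hne : {c | c ∈ A ∧ β < c}.Nonempty := ⟨a, ha, hlt⟩
  have hmem := csInf_mem hne
  exact ⟨hmem.1, hmem.2, hsub hmem.1⟩

lemma nxt_lt {A : Set Ordinal.{0}} (hsub : A ⊆ Iio κ.ord) (hunc : Cardinal.aleph0 < κ)
    (β : Ordinal) : nxt A β < κ.ord := by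
  rcases eq_empty_or_nonempty {c | c ∈ A ∧ β < c} with h | h
  · rw [nxt, h, Ordinal.sInf_empty]
    exact aux_ordPos hunc
  · exact hsub (csInf_mem h).1

/-- ω-chain construction: iterate an increasing function below `κ.ord` to produce a
limit point of the iteration. -/
lemma chain (hreg : κ.IsRegular) (hunc : Cardinal.aleph0 < κ)
    (F : Ordinal.{0} → Ordinal.{0})
    (hF : ∀ α < κ.ord, α < F α ∧ F α < κ.ord)
    (α₀ : Ordinal.{0}) (h0 : α₀ < κ.ord) :
    ∃ δ, α₀ < δ ∧ δ < κ.ord ∧ Order.IsSuccLimit δ ∧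
      (∀ n : ℕ, F^[n] α₀ < δ) ∧ (∀ γ < δ, ∃ n : ℕ, γ < F^[n] α₀) := by
  set f : ℕ → Ordinal.{0} := fun n => F^[n] α₀ with hfdef
  have hlt : ∀ n, f n < κ.ord := by
    intro n
    induction n with
    | zero => simpa [f] using h0
    | succ n ih =>
      have := (hF _ ih).2
      simpa [f, Function.iterate_succ_apply'] using this
  have hmono : ∀ n, f n < f (n + 1) := by
    intro n
    have := (hF _ (hlt n)).1
    simpa [f, Function.iterate_succ_apply'] using this
  set δ := ⨆ n, f n with hδdef
  have hfle : ∀ n, f n ≤ δ := fun n => Ordinal.le_iSup f n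
  have hflt : ∀ n, f n < δ := fun n => lt_of_lt_of_le (hmono n) (hfle (n + 1))
  have hδκ : δ < κ.ord := by
    refine Ordinal.iSup_lt_ord ?_ hlt
    rw [hreg.cof_eq]
    simpa using hunc
  have hcof : ∀ γ < δ, ∃ n, γ < f n := fun γ hγ => Ordinal.lt_iSup_iff.mp hγ
  have hlim : Order.IsSuccLimit δ := by
    rw [Ordinal.isSuccLimit_iff]
    refine ⟨?_, Order.isSuccPrelimit_of_succ_lt fun x hx => ?_⟩
    · intro h
      exact absurd (h ▸ hflt 0) (by simp [not_lt_zero])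
    · obtain ⟨n, hn⟩ := hcof x hx
      exact lt_of_le_of_lt (Order.succ_le_of_lt hn) (hflt n)
  exact ⟨δ, hflt 0, hδκ, hlim, hflt, hcof⟩

/-- The closure points of a function `g` form a club. -/
lemma closure_club (hreg : κ.IsRegular) (hunc : Cardinal.aleph0 < κ)
    (g : Ordinal.{0} → Ordinal.{0}) (hg : ∀ α, g α < κ.ord) :
    IsClubIn κ {δ | δ < κ.ord ∧ Order.IsSuccLimit δ ∧ ∀ α < δ, g α < δ} := by
  refine ⟨fun δ hδ => hδ.1, ?_, ?_⟩
  · intro α hα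
    set F : Ordinal → Ordinal :=
      fun β => (max β (Ordinal.bsup β (fun a _ => g a))) + 1 with hFdef
    have hsucc : ∀ b : Ordinal, b < b + 1 := by
      intro b; rw [Ordinal.add_one_eq_succ]; exact Order.lt_succ b
    have hFs : ∀ β < κ.ord, β < F β ∧ F β < κ.ord := by
      intro β hβ
      constructor
      · exact lt_of_le_of_lt (le_max_left _ _) (hsucc _)
      · have hb : Ordinal.bsup β (fun a _ => g a) < κ.ord :=
          Ordinal.bsup_lt_ord (by rw [hreg.cof_eq]; exact Cardinal.lt_ord.mp hβ)
            (fun i _ => hg i)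
        exact aux_succ_lt hunc (max_lt hβ hb)
    obtain ⟨δ, hαδ, hδκ, hlim, hit, hcof⟩ := chain hreg hunc F hFs α hα
    refine ⟨δ, ⟨hδκ, hlim, ?_⟩, hαδ⟩
    intro γ hγ
    obtain ⟨n, hn⟩ := hcof γ hγ
    have h1 : g γ ≤ Ordinal.bsup (F^[n] α) (fun a _ => g a) := Ordinal.le_bsup _ γ hn
    have h2 : g γ < F (F^[n] α) :=
      lt_of_le_of_lt (h1.trans (le_max_right _ _)) (hsucc _)
    rw [← Function.iterate_succ_apply' F n] at h2
    exact h2.trans (hit (n + 1))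
  · intro δ hδκ hlim happ
    refine ⟨hδκ, hlim, fun α hα => ?_⟩
    obtain ⟨β, hβD, hαβ, hβδ⟩ := happ α hα
    exact (hβD.2.2 α hαβ).trans hβδ

/-- Intersection of two clubs is a club. -/
lemma club_inter (hreg : κ.IsRegular) (hunc : Cardinal.aleph0 < κ)
    {C₁ C₂ : Set Ordinal.{0}} (h₁ : IsClubIn κ C₁) (h₂ : IsClubIn κ C₂) :
    IsClubIn κ (C₁ ∩ C₂) := by
  refine ⟨fun x hx => h₁.1 hx.1, ?_, ?_⟩
  · intro α hα
    set F := fun β => nxt C₂ (nxt C₁ β) with hFdef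
    have hFs : ∀ β < κ.ord, β < F β ∧ F β < κ.ord := by
      intro β hβ
      obtain ⟨hm1, hl1, hk1⟩ := nxt_spec h₁.1 h₁.2.1 hβ
      obtain ⟨hm2, hl2, hk2⟩ := nxt_spec h₂.1 h₂.2.1 hk1
      exact ⟨hl1.trans hl2, hk2⟩
    obtain ⟨δ, hαδ, hδκ, hlim, hit, hcof⟩ := chain hreg hunc F hFs α hα
    have hitκ : ∀ n, F^[n] α < κ.ord := fun n => (hit n).trans hδκ
    have hδ1 : δ ∈ C₁ := by
      refine h₁.2.2 δ hδκ hlim fun γ hγ => ?_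
      obtain ⟨n, hn⟩ := hcof γ hγ
      obtain ⟨hm1, hl1, hk1⟩ := nxt_spec h₁.1 h₁.2.1 (hitκ n)
      refine ⟨nxt C₁ (F^[n] α), hm1, hn.trans hl1, ?_⟩
      have hlt : nxt C₁ (F^[n] α) < F (F^[n] α) :=
        (nxt_spec h₂.1 h₂.2.1 hk1).2.1
      rw [← Function.iterate_succ_apply' F n] at hlt
      exact hlt.trans (hit (n + 1))
    have hδ2 : δ ∈ C₂ := by
      refine h₂.2.2 δ hδκ hlim fun γ hγ => ?_
      obtain ⟨n, hn⟩ := hcof γ hγ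
      obtain ⟨hm1, hl1, hk1⟩ := nxt_spec h₁.1 h₁.2.1 (hitκ n)
      obtain ⟨hm2, hl2, hk2⟩ := nxt_spec h₂.1 h₂.2.1 hk1
      refine ⟨F (F^[n] α), hm2, hn.trans (hl1.trans hl2), ?_⟩
      rw [← Function.iterate_succ_apply' F n]
      exact hit (n + 1)
    exact ⟨δ, ⟨hδ1, hδ2⟩, hαδ⟩
  · intro δ hδκ hlim happ
    constructor
    · refine h₁.2.2 δ hδκ hlim fun α hα => ?_
      obtain ⟨β, hβ, hh1, hh2⟩ := happ α hα
      exact ⟨β, hβ.1, hh1, hh2⟩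
    · refine h₂.2.2 δ hδκ hlim fun α hα => ?_
      obtain ⟨β, hβ, hh1, hh2⟩ := happ α hα
      exact ⟨β, hβ.2, hh1, hh2⟩

/-- Diagonal intersection of clubs is a club. -/
lemma diag_inter (hreg : κ.IsRegular) (hunc : Cardinal.aleph0 < κ)
    (C : Ordinal.{0} → Set Ordinal.{0}) (hC : ∀ α, IsClubIn κ (C α)) :
    IsClubIn κ {ξ | ξ < κ.ord ∧ ∀ α < ξ, ξ ∈ C α} := by
  refine ⟨fun x hx => hx.1, ?_, ?_⟩
  · intro α₀ hα₀
    set F : Ordinal → Ordinal :=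
      fun β => (max β (Ordinal.bsup β (fun a _ => nxt (C a) β))) + 1 with hFdef
    have hsucc : ∀ b : Ordinal, b < b + 1 := by
      intro b; rw [Ordinal.add_one_eq_succ]; exact Order.lt_succ b
    have hFs : ∀ β < κ.ord, β < F β ∧ F β < κ.ord := by
      intro β hβ
      constructor
      · exact lt_of_le_of_lt (le_max_left _ _) (hsucc _)
      · have hb : Ordinal.bsup β (fun a _ => nxt (C a) β) < κ.ord :=
          Ordinal.bsup_lt_ord (by rw [hreg.cof_eq]; exact Cardinal.lt_ord.mp hβ)
            (fun i _ => (nxt_spec (hC i).1 (hC i).2.1 hβ).2.2)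
        exact aux_succ_lt hunc (max_lt hβ hb)
    obtain ⟨δ, hαδ, hδκ, hlim, hit, hcof⟩ := chain hreg hunc F hFs α₀ hα₀
    have hitκ : ∀ n, F^[n] α₀ < κ.ord := fun n => (hit n).trans hδκ
    refine ⟨δ, ⟨hδκ, fun α hα => ?_⟩, hαδ⟩
    refine (hC α).2.2 δ hδκ hlim fun γ hγ => ?_
    obtain ⟨n, hn⟩ := hcof (max α γ) (max_lt hα hγ)
    obtain ⟨hm, hl, hk⟩ := nxt_spec (hC α).1 (hC α).2.1 (hitκ n)
    refine ⟨nxt (C α) (F^[n] α₀), hm, ((le_max_right α γ).trans_lt hn).trans hl, ?_⟩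
    have h1 : nxt (C α) (F^[n] α₀) ≤
        Ordinal.bsup (F^[n] α₀) (fun a _ => nxt (C a) (F^[n] α₀)) :=
      Ordinal.le_bsup _ α ((le_max_left α γ).trans_lt hn)
    have h2 : nxt (C α) (F^[n] α₀) < F (F^[n] α₀) :=
      lt_of_le_of_lt (h1.trans (le_max_right _ _)) (hsucc _)
    rw [← Function.iterate_succ_apply' F n] at h2
    exact h2.trans (hit (n + 1))
  · intro δ hδκ hlim happ
    refine ⟨hδκ, fun α hα => ?_⟩
    refine (hC α).2.2 δ hδκ hlim fun γ hγ => ?_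
    obtain ⟨β, hβ, hh1, hh2⟩ := happ (max α γ) (max_lt hα hγ)
    exact ⟨β, hβ.2 α ((le_max_left α γ).trans_lt hh1),
      (le_max_right α γ).trans_lt hh1, hh2⟩

/-- `Iio κ.ord` is a club. -/
lemma club_Iio (hunc : Cardinal.aleph0 < κ) : IsClubIn κ (Iio κ.ord) := by
  refine ⟨subset_rfl, fun α hα => ⟨α + 1, aux_succ_lt hunc hα, ?_⟩, fun δ hδ _ _ => hδ⟩
  rw [Ordinal.add_one_eq_succ]; exact Order.lt_succ α

/-- Tails are clubs. -/
lemma club_tail (hunc : Cardinal.aleph0 < κ) {θ : Ordinal} (hθ : θ < κ.ord) :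
    IsClubIn κ {ξ | θ < ξ ∧ ξ < κ.ord} := by
  refine ⟨fun x hx => hx.2, ?_, ?_⟩
  · intro α hα
    refine ⟨max α θ + 1, ⟨?_, aux_succ_lt hunc (max_lt hα hθ)⟩, ?_⟩
    · exact lt_of_le_of_lt (le_max_right α θ)
        (by rw [Ordinal.add_one_eq_succ]; exact Order.lt_succ _)
    · exact lt_of_le_of_lt (le_max_left α θ)
        (by rw [Ordinal.add_one_eq_succ]; exact Order.lt_succ _)
  · intro δ hδκ hlim happ
    refine ⟨?_, hδκ⟩
    obtain ⟨β, hβ, _, hβδ⟩ := happ 0 hlim.pos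
    exact hβ.1.trans hβδ

end Aux

section Aux2
variable {κ : Cardinal.{0}} {J : Set Ordinal.{0} → Prop}

/-- A pleasant proper ideal contains no club. -/
lemma no_club_in_J (hunc : Cardinal.aleph0 < κ) (hJ : IsIdeal κ J) (hpl : Pleasant J)
    (hprop : Proper κ J) {C : Set Ordinal.{0}} (hC : IsClubIn κ C) (hCJ : J C) : False := by
  have hCs := hC.1
  have hCu := hC.2.1
  set g := nxt C with hgdef
  have hgκ : ∀ β, g β < κ.ord := fun β => nxt_lt hCs hunc β
  have hX : ∀ α, J (Iio (g α)) := fun α => aux_J_Iio hunc hJ (hgκ α)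
  have hdiag : J (diagU C fun α => Iio (g α)) := hpl C hCJ _ hX
  have hcover : Iio κ.ord ⊆ (Iio (g 0) ∪ C) ∪ diagU C (fun α => Iio (g α)) := by
    intro ξ hξ
    by_cases hξC : ξ ∈ C
    · exact mem_union_left _ (mem_union_right _ hξC)
    rcases eq_empty_or_nonempty (C ∩ Iio ξ) with hemp | hne
    · refine mem_union_left _ (mem_union_left _ ?_)
      obtain ⟨hm, hl, hk⟩ := nxt_spec hCs hCu (aux_ordPos hunc)
      by_contra hcon
      have hle : g 0 ≤ ξ := not_lt.mp hcon
      have hlt : g 0 < ξ := lt_of_le_of_ne hle fun h => hξC (h ▸ hm)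
      have : g 0 ∈ C ∩ Iio ξ := ⟨hm, hlt⟩
      rw [hemp] at this
      exact notMem_empty _ this
    · set c := sSup (C ∩ Iio ξ) with hcdef
      have hbdd : BddAbove (C ∩ Iio ξ) := ⟨ξ, fun x hx => le_of_lt hx.2⟩
      have hcle : c ≤ ξ := csSup_le hne fun x hx => le_of_lt hx.2
      have hcκ : c < κ.ord := lt_of_le_of_lt hcle hξ
      have hcC : c ∈ C := by
        by_contra hcC
        rcases Ordinal.zero_or_succ_or_isSuccLimit c with h0 | ⟨b, hb⟩ | hlim
        · obtain ⟨x, hx⟩ := hne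
          have hxc : x ≤ c := le_csSup hbdd hx
          rw [h0] at hxc
          have hx0 : x = 0 := le_antisymm hxc (zero_le (a := x))
          exact hcC (by rw [h0, ← hx0]; exact hx.1)
        · have hbc : b < c := by rw [← hb]; exact Order.lt_succ b
          obtain ⟨x, hx, hbx⟩ := exists_lt_of_lt_csSup hne hbc
          have hxc : x ≤ c := le_csSup hbdd hx
          have hxe : x = c := le_antisymm hxc (by rw [← hb]; exact Order.succ_le_of_lt hbx)
          exact hcC (hxe ▸ hx.1)
        · refine hcC (hC.2.2 c hcκ hlim ?_)
          intro α hα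
          obtain ⟨x, hx, hαx⟩ := exists_lt_of_lt_csSup hne hα
          have hxc : x ≤ c := le_csSup hbdd hx
          exact ⟨x, hx.1, hαx, lt_of_le_of_ne hxc fun h => hcC (h ▸ hx.1)⟩
      have hcξ : c < ξ := lt_of_le_of_ne hcle fun h => hξC (h ▸ hcC)
      refine mem_union_right _ ⟨c, hcξ, hcC, ?_⟩
      obtain ⟨hm, hl, hk⟩ := nxt_spec hCs hCu hcκ
      by_contra hcon
      have hle : g c ≤ ξ := not_lt.mp hcon
      have hgcξ : g c < ξ := lt_of_le_of_ne hle fun h => hξC (h ▸ hm)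
      have hgc : g c ≤ c := le_csSup hbdd ⟨hm, hgcξ⟩
      exact absurd hl (not_lt.mpr hgc)
  exact hprop (hJ.2.1 _ _ (hJ.2.2.1 _ _ (hJ.2.2.1 _ _ (hX 0) hCJ) hdiag) hcover)

/-- Diagonal unions of `J`-sets are covered by a `J`-set modulo a club. -/
lemma diagU_cov (hreg : κ.IsRegular) (hunc : Cardinal.aleph0 < κ)
    (hJ : IsIdeal κ J) (hpl : Pleasant J)
    (Y : Ordinal.{0} → Set Ordinal.{0}) (hY : ∀ α, J (Y α)) :
    ∃ Y' D, J Y' ∧ IsClubIn κ D ∧ diagU (Iio κ.ord) Y ∩ D ⊆ Y' := by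
  by_cases hA : ∃ A, J A ∧ ∀ β < κ.ord, ∃ a ∈ A, β < a
  · obtain ⟨A, hAJ, hAu⟩ := hA
    have hAsub := hJ.1 A hAJ
    set g := nxt A with hgdef
    have hgκ : ∀ β, g β < κ.ord := fun β => nxt_lt hAsub hunc β
    set V : Ordinal.{0} → Set Ordinal.{0} := fun a => ⋃ α ∈ Iio (g a), Y α with hVdef
    have hVJ : ∀ a, J (V a) := fun a =>
      hJ.2.2.2.2 (g a) (Cardinal.lt_ord.mp (hgκ a)) Y hY
    refine ⟨diagU A V, {δ | δ < κ.ord ∧ Order.IsSuccLimit δ ∧ ∀ α < δ, g α < δ},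
      hpl A hAJ V hVJ, closure_club hreg hunc g hgκ, ?_⟩
    rintro ξ ⟨⟨α, hαξ, hακ, hξY⟩, hξκ, hξlim, hξcl⟩
    rw [mem_Iio] at hακ
    obtain ⟨ham, hal, hak⟩ := nxt_spec hAsub hAu hακ
    obtain ⟨ham2, hal2, hak2⟩ := nxt_spec hAsub hAu hak
    exact ⟨g α, hξcl α hαξ, ham, mem_biUnion (mem_Iio.mpr (hal.trans hal2)) hξY⟩
  · push_neg at hA
    have hbd : ∀ α, ∃ θ, θ < κ.ord ∧ Y α ⊆ Iio θ := by
      intro α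
      obtain ⟨β, hβκ, hβ⟩ := hA (Y α) (hY α)
      exact ⟨β + 1, aux_succ_lt hunc hβκ, fun x hx => by
        have := hβ x hx
        rw [mem_Iio, Ordinal.add_one_eq_succ, Order.lt_succ_iff]
        exact this⟩
    choose g hgκ hgb using hbd
    refine ⟨∅, {δ | δ < κ.ord ∧ Order.IsSuccLimit δ ∧ ∀ α < δ, g α < δ},
      aux_J_empty hunc hJ, closure_club hreg hunc g hgκ, ?_⟩
    rintro ξ ⟨⟨α, hαξ, hακ, hξY⟩, hξκ, hξlim, hξcl⟩
    exact absurd ((hgb α hξY).trans (hξcl α hαξ)) (lt_irrefl ξ)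

end Aux2

section Main
variable {κ : Cardinal.{0}} {J : Set Ordinal.{0} → Prop}

/-- The ideal generated by `J` and the nonstationary sets, explicitly. -/
def Kgen (κ : Cardinal.{0}) (J : Set Ordinal.{0} → Prop) (X : Set Ordinal.{0}) : Prop :=
  X ⊆ Iio κ.ord ∧ ∃ Y C, J Y ∧ IsClubIn κ C ∧ X ∩ C ⊆ Y

lemma Kgen_isIdeal (hreg : κ.IsRegular) (hunc : Cardinal.aleph0 < κ)
    (hJ : IsIdeal κ J) : IsIdeal κ (Kgen κ J) := by
  refine ⟨fun X hX => hX.1, ?_, ?_, ?_, ?_⟩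
  · rintro X Z ⟨hXs, Y, C, hY, hC, hXC⟩ hZX
    exact ⟨hZX.trans hXs, Y, C, hY, hC, fun x hx => hXC ⟨hZX hx.1, hx.2⟩⟩
  · rintro X Z ⟨hXs, Y₁, C₁, hY₁, hC₁, hXC₁⟩ ⟨hZs, Y₂, C₂, hY₂, hC₂, hXC₂⟩
    refine ⟨union_subset hXs hZs, Y₁ ∪ Y₂, C₁ ∩ C₂, hJ.2.2.1 _ _ hY₁ hY₂,
      club_inter hreg hunc hC₁ hC₂, ?_⟩
    rintro x ⟨hx, hxC₁, hxC₂⟩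
    rcases hx with hx | hx
    · exact Or.inl (hXC₁ ⟨hx, hxC₁⟩)
    · exact Or.inr (hXC₂ ⟨hx, hxC₂⟩)
  · intro ξ hξ
    exact ⟨singleton_subset_iff.mpr hξ, {ξ}, Iio κ.ord, hJ.2.2.2.1 ξ hξ,
      club_Iio hunc, fun x hx => hx.1⟩
  · intro θ hθ X hX
    have hθκ : θ < κ.ord := Cardinal.lt_ord.mpr hθ
    choose hsub Y C hYJ hCc hXC using hX
    refine ⟨?_, ⋃ α ∈ Iio θ, Y α,
      {ξ | ξ < κ.ord ∧ ∀ α < ξ, ξ ∈ C α} ∩ {ξ | θ < ξ ∧ ξ < κ.ord},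
      hJ.2.2.2.2 θ hθ Y hYJ,
      club_inter hreg hunc (diag_inter hreg hunc C hCc) (club_tail hunc hθκ), ?_⟩
    · intro x hx
      obtain ⟨α, hα, hxα⟩ := mem_iUnion₂.mp hx
      exact hsub α hxα
    · rintro x ⟨hx, ⟨hxκ, hxΔ⟩, hθx, _⟩
      obtain ⟨α, hα, hxα⟩ := mem_iUnion₂.mp hx
      rw [mem_Iio] at hα
      have hxCα : x ∈ C α := hxΔ α (hα.trans hθx)
      exact mem_iUnion₂.mpr ⟨α, mem_Iio.mpr hα, hXC α ⟨hxα, hxCα⟩⟩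

lemma Kgen_gens (hunc : Cardinal.aleph0 < κ) (hJ : IsIdeal κ J) :
    ∀ Z, (J Z ∨ NS κ Z) → Kgen κ J Z := by
  rintro Z (hZ | ⟨hZs, C, hC, hZC⟩)
  · exact ⟨hJ.1 Z hZ, Z, Iio κ.ord, hZ, club_Iio hunc, fun x hx => hx.1⟩
  · exact ⟨hZs, ∅, C, aux_J_empty hunc hJ, hC, by rw [hZC]⟩

lemma Kgen_sub_gen (hJ : IsIdeal κ J) {X : Set Ordinal.{0}} (hX : Kgen κ J X) :
    genIdeal κ (fun Z => J Z ∨ NS κ Z) X := by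
  obtain ⟨hXs, Y, C, hY, hC, hXC⟩ := hX
  intro K' hK' hgen
  have hY' : K' Y := hgen Y (Or.inl hY)
  have hNS : K' (X \ C) := by
    refine hgen (X \ C) (Or.inr ⟨(diff_subset).trans hXs, C, hC, ?_⟩)
    ext x
    simp only [mem_inter_iff, mem_diff, mem_empty_iff_false, iff_false, not_and]
    tauto
  refine hK'.2.1 _ _ (hK'.2.2.1 _ _ hY' hNS) ?_
  intro x hx
  by_cases hxC : x ∈ C
  · exact Or.inl (hXC ⟨hx, hxC⟩)
  · exact Or.inr ⟨hx, hxC⟩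

end Main

/-- Every proper pleasant ideal is subnormal: the ideal generated by `I ∪ NS κ`
is a proper normal ideal extending `I`. -/
theorem stmt1 (κ : Cardinal.{0}) (hreg : κ.IsRegular) (hunc : Cardinal.aleph0 < κ)
    (J : Set Ordinal.{0} → Prop) (hJ : IsIdeal κ J) (hpl : Pleasant J)
    (hprop : Proper κ J) :
    Proper κ (genIdeal κ (fun X => J X ∨ NS κ X)) ∧
    Normal κ (genIdeal κ (fun X => J X ∨ NS κ X)) ∧
    (∀ X, J X → genIdeal κ (fun X => J X ∨ NS κ X) X) := by
  have hKid := Kgen_isIdeal hreg hunc hJ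
  have hKg := Kgen_gens hunc hJ
  refine ⟨?_, ?_, ?_⟩
  · -- Proper
    intro hcon
    obtain ⟨_, Y, C, hY, hC, hsub⟩ := hcon (Kgen κ J) hKid hKg
    have hCY : C ⊆ Y := fun c hc => hsub ⟨hC.1 hc, hc⟩
    exact no_club_in_J hunc hJ hpl hprop hC (hJ.2.1 _ _ hY hCY)
  · -- Normal
    intro X hX
    have hXK : ∀ α, Kgen κ J (X α) := fun α => hX α (Kgen κ J) hKid hKg
    choose hsub Y C hYJ hCc hXC using hXK
    obtain ⟨Y', D, hY'J, hDc, hcov⟩ := diagU_cov hreg hunc hJ hpl Y hYJ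
    have hΔ := diag_inter hreg hunc C hCc
    refine Kgen_sub_gen hJ ⟨?_, Y', D ∩ {ξ | ξ < κ.ord ∧ ∀ α < ξ, ξ ∈ C α},
      hY'J, club_inter hreg hunc hDc hΔ, ?_⟩
    · rintro ξ ⟨α, hαξ, hακ, hξX⟩
      exact hsub α hξX
    · rintro ξ ⟨⟨α, hαξ, hακ, hξX⟩, hξD, hξκ, hξΔ⟩
      have hξC : ξ ∈ C α := hξΔ α hαξ
      exact hcov ⟨⟨α, hαξ, hακ, hXC α ⟨hξX, hξC⟩⟩, hξD⟩
  · -- extends J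
    intro X hX K' hK' hgen
    exact hgen X (Or.inl hX)

end PaperIdeals
end

section
/- An ideal I on a regular uncountable cardinal κ is subpleasant if and only if it is subnormal. -/
open Set

namespace PaperIdeals

/-- `I` is subpleasant iff `I` is subnormal. -/
theorem stmt2 (κ : Cardinal.{0}) (hreg : κ.IsRegular) (hunc : Cardinal.aleph0 < κ)
    (J : Set Ordinal.{0} → Prop) (hJ : IsIdeal κ J) :
    (∃ K, IsIdeal κ K ∧ Proper κ K ∧ Pleasant K ∧ ∀ X, J X → K X) ↔
    (∃ K, IsIdeal κ K ∧ Proper κ K ∧ Normal κ K ∧ ∀ X, J X → K X) := by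
  classical
  have hord0 : (0 : Ordinal) < κ.ord := by
    rw [Cardinal.lt_ord, Ordinal.card_zero]
    exact (Cardinal.aleph0_pos).trans hunc
  have hordlim : Order.IsSuccLimit (κ.ord) := Cardinal.isSuccLimit_ord hunc.le
  constructor
  · rintro ⟨K, hK, hKp, hKpl, hJK⟩
    obtain ⟨hsub, hmono, hun, hsing, hcomp⟩ := hK
    have hKempty : K ∅ := hmono _ _ (hsing 0 hord0) (empty_subset _)
    set K' : Set Ordinal.{0} → Prop := fun X =>
      X ⊆ Iio κ.ord ∧ ∃ F : Ordinal.{0} → Set Ordinal.{0},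
        (∀ α, K (F α)) ∧ X ⊆ insert 0 (diagU (Iio κ.ord) F) with hK'def
    have hKK' : ∀ X, K X → K' X := by
      intro X hX
      refine ⟨hsub X hX, fun _ => X, fun _ => hX, ?_⟩
      intro ξ hξ
      rcases eq_or_ne ξ 0 with h | h
      · exact Or.inl h
      · exact Or.inr ⟨0, pos_iff_ne_zero.2 h, hord0, hξ⟩
    have hK'ideal : IsIdeal κ K' := by
      refine ⟨fun X hX => hX.1, ?_, ?_, ?_, ?_⟩
      · rintro X Y ⟨hX1, F, hF, hFc⟩ hYX
        exact ⟨hYX.trans hX1, F, hF, hYX.trans hFc⟩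
      · rintro X Y ⟨hX1, F, hF, hFc⟩ ⟨hY1, G, hG, hGc⟩
        refine ⟨union_subset hX1 hY1, fun α => F α ∪ G α,
          fun α => hun _ _ (hF α) (hG α), ?_⟩
        rintro ξ (hξ | hξ)
        · rcases hFc hξ with h | ⟨α, h1, h2, h3⟩
          · exact Or.inl h
          · exact Or.inr ⟨α, h1, h2, Or.inl h3⟩
        · rcases hGc hξ with h | ⟨α, h1, h2, h3⟩
          · exact Or.inl h
          · exact Or.inr ⟨α, h1, h2, Or.inr h3⟩
      · intro ξ hξ
        exact hKK' _ (hsing ξ hξ)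
      · intro θ hθ X hX
        have h1 : ∀ α, X α ⊆ Iio κ.ord := fun α => (hX α).1
        choose F hF hFc using fun α => (hX α).2
        refine ⟨?_, fun β => ⋃ α ∈ Iio θ, F α β,
          fun β => hcomp θ hθ _ (fun α => hF α β), ?_⟩
        · intro ξ hξ
          simp only [mem_iUnion] at hξ
          obtain ⟨α, _, hξ⟩ := hξ
          exact h1 α hξ
        · intro ξ hξ
          simp only [mem_iUnion] at hξ
          obtain ⟨α, hα, hξ⟩ := hξ
          rcases hFc α hξ with h | ⟨β, h1', h2, h3⟩
          · exact Or.inl h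
          · refine Or.inr ⟨β, h1', h2, ?_⟩
            simp only [mem_iUnion]
            exact ⟨α, hα, h3⟩
    have hK'norm : Normal κ K' := by
      intro X hX
      have h1 : ∀ α, X α ⊆ Iio κ.ord := fun α => (hX α).1
      choose F hF hFc using fun α => (hX α).2
      set G : Ordinal.{0} → Set Ordinal.{0} := fun γ =>
        if γ < κ.ord then ⋃ p ∈ Iio (γ + 1), ⋃ q ∈ Iio (γ + 1), F p q else ∅
        with hGdef
      have hGK : ∀ γ, K (G γ) := by
        intro γ
        by_cases hγ : γ < κ.ord
        · have hγ1 : γ + 1 < κ.ord := hordlim.succ_lt hγ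
          have hcard : (γ + 1).card < κ := Cardinal.lt_ord.1 hγ1
          have heq : G γ = ⋃ p ∈ Iio (γ + 1), ⋃ q ∈ Iio (γ + 1), F p q := if_pos hγ
          rw [heq]
          exact hcomp _ hcard _ (fun p => hcomp _ hcard _ (fun q => hF p q))
        · have heq : G γ = ∅ := if_neg hγ
          rw [heq]
          exact hKempty
      refine ⟨?_, G, hGK, ?_⟩
      · rintro ξ ⟨α, hαξ, hακ, hξ⟩
        exact h1 α hξ
      · rintro ξ ⟨α, hαξ, hακ, hξ⟩
        have hξκ : ξ < κ.ord := h1 α hξ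
        rcases hFc α hξ with h | ⟨β, hβξ, hβκ, hmem⟩
        · exact absurd h (pos_iff_ne_zero.1 (lt_of_le_of_lt (zero_le (a := α)) hαξ))
        · have hmaxκ : max α β < κ.ord := lt_trans (max_lt hαξ hβξ) hξκ
          refine Or.inr ⟨max α β, max_lt hαξ hβξ, hmaxκ, ?_⟩
          have heq : G (max α β) = ⋃ p ∈ Iio (max α β + 1), ⋃ q ∈ Iio (max α β + 1), F p q :=
            if_pos hmaxκ
          rw [heq]
          simp only [mem_iUnion, mem_Iio]
          refine ⟨α, ?_, β, ?_, hmem⟩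
          · exact lt_of_le_of_lt (le_max_left α β) (Order.lt_add_one_iff.2 le_rfl)
          · exact lt_of_le_of_lt (le_max_right α β) (Order.lt_add_one_iff.2 le_rfl)
    have hK'proper : Proper κ K' := by
      rintro ⟨-, F, hF, hcov⟩
      have hstep : ∀ ξ : Ordinal.{0}, ξ ≠ 0 → ξ < κ.ord → ∃ α, α < ξ ∧ ξ ∈ F α := by
        intro ξ h0 hξ
        rcases hcov hξ with h | ⟨α, h1, _, h3⟩
        · exact absurd h h0
        · exact ⟨α, h1, h3⟩
      choose! g hg1 hg2 using hstep
      set C : ℕ → Set Ordinal.{0} := fun n =>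
        Nat.rec {(0 : Ordinal)} (fun _ Cn => insert (0 : Ordinal) (diagU Cn F)) n with hCdef
      have hCK : ∀ n, K (C n) := by
        intro n
        induction n with
        | zero => exact hsing 0 hord0
        | succ n ih =>
          have : C (n + 1) = {(0 : Ordinal)} ∪ diagU (C n) F := Set.insert_eq _ _
          rw [this]
          exact hun _ _ (hsing 0 hord0) (hKpl _ ih F hF)
      have hCcov : ∀ ξ < κ.ord, ∃ n, ξ ∈ C n := by
        intro ξ
        induction ξ using Ordinal.induction with
        | h ξ ih =>
          intro hξ
          rcases eq_or_ne ξ 0 with h | h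
          · exact ⟨0, by rw [h]; exact rfl⟩
          · obtain ⟨n, hn⟩ := ih (g ξ) (hg1 ξ h hξ) ((hg1 ξ h hξ).trans hξ)
            exact ⟨n + 1, Or.inr ⟨g ξ, hg1 ξ h hξ, hn, hg2 ξ h hξ⟩⟩
      set D : Ordinal.{0} → Set Ordinal.{0} := fun o =>
        if h : ∃ n : ℕ, (n : Ordinal) = o then C h.choose else ∅ with hDdef
      have hDK : ∀ o, K (D o) := by
        intro o
        by_cases h : ∃ n : ℕ, (n : Ordinal) = o
        · have heq : D o = C h.choose := dif_pos h
          rw [heq]; exact hCK _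
        · have heq : D o = ∅ := dif_neg h
          rw [heq]; exact hKempty
      have hfinal : Iio κ.ord ⊆ ⋃ o ∈ Iio (Ordinal.omega0), D o := by
        intro ξ hξ
        obtain ⟨n, hn⟩ := hCcov ξ hξ
        simp only [mem_iUnion, mem_Iio]
        refine ⟨(n : Ordinal), Ordinal.nat_lt_omega0 n, ?_⟩
        have hex : ∃ m : ℕ, (m : Ordinal) = (n : Ordinal) := ⟨n, rfl⟩
        have heq : D (n : Ordinal) = C hex.choose := dif_pos hex
        rw [heq]
        have : hex.choose = n := by
          have := hex.choose_spec
          exact_mod_cast this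
        rw [this]
        exact hn
      have : K (Iio κ.ord) := by
        refine hmono _ _ (hcomp Ordinal.omega0 ?_ D hDK) hfinal
        rw [Ordinal.card_omega0]
        exact hunc
      exact hKp this
    exact ⟨K', hK'ideal, hK'proper, hK'norm, fun X hX => hKK' X (hJK X hX)⟩
  · rintro ⟨K, hK, hKp, hKn, hJK⟩
    refine ⟨K, hK, hKp, ?_, hJK⟩
    intro A hA X hX
    refine hK.2.1 _ _ (hKn X hX) ?_
    rintro ξ ⟨α, h1, h2, h3⟩
    exact ⟨α, h1, hK.1 A hA h2, h3⟩


end PaperIdeals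
end

section
/- If I is an ideal on a regular uncountable cardinal κ such that the restriction I↾A is pleasant for every A ∈ I⁺, then I is normal. -/
open Set

namespace PaperIdeals

/-- Iterated restriction sets used in the proof of `stmt3`. -/
def iterD (D : Set Ordinal.{0}) (g : Ordinal.{0} → Ordinal.{0}) : ℕ → Set Ordinal.{0}
  | 0 => D
  | n + 1 => {ξ | ξ ∈ iterD D g n ∧ g ξ ∈ iterD D g n}

/-- If `I ↾ A` is pleasant for every `A ∈ I⁺`, then `I` is normal. -/
theorem stmt3 (κ : Cardinal.{0}) (hreg : κ.IsRegular) (hunc : Cardinal.aleph0 < κ)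
    (J : Set Ordinal.{0} → Prop) (hJ : IsIdeal κ J) (hprop : Proper κ J)
    (h : ∀ A, Pos κ J A → Pleasant (restrict κ J A)) :
    Normal κ J := by
  classical
  intro X hX
  by_contra hD
  set D : Set Ordinal.{0} := diagU (Iio κ.ord) X with hDdef
  obtain ⟨hsub, hmono, hun, hsing, hsmall⟩ := hJ
  have hXsub : ∀ α, X α ⊆ Iio κ.ord := fun α => hsub _ (hX α)
  have h0 : (0 : Ordinal) < κ.ord := by
    have h1 : (0 : Cardinal) < κ := lt_trans Cardinal.aleph0_pos hunc
    have := (Cardinal.ord_lt_ord).2 h1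
    simpa using this
  have hempty : J ∅ := hmono {0} ∅ (hsing 0 h0) (empty_subset _)
  have hDsub : D ⊆ Iio κ.ord := by
    rintro ξ ⟨α, hαξ, hα, hXξ⟩
    exact hXsub α hXξ
  set g : Ordinal.{0} → Ordinal.{0} := fun ξ => sInf {α | α < ξ ∧ ξ ∈ X α} with hgdef
  have hgD : ∀ ξ ∈ D, g ξ < ξ ∧ ξ ∈ X (g ξ) := by
    rintro ξ ⟨α, hαξ, hα, hXξ⟩
    have hne : {α | α < ξ ∧ ξ ∈ X α}.Nonempty := ⟨α, hαξ, hXξ⟩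
    exact csInf_mem hne
  set T : Set Ordinal.{0} → Set Ordinal.{0} := fun R => {ξ | ξ ∈ D ∧ g ξ ∈ R} with hTdef
  -- Key lemma, via pleasantness of the restriction to `T R`.
  have lemL : ∀ R, J (T R ∩ R) → J (T R) := by
    intro R hR
    by_contra hTR
    have hpos : Pos κ J (T R) := ⟨fun ξ hξ => hDsub hξ.1, hTR⟩
    have hpl := h _ hpos
    have hA : restrict κ J (T R) (R ∩ Iio κ.ord) := by
      refine ⟨inter_subset_right, hmono _ _ hR ?_⟩
      rintro ξ ⟨⟨hξR, _⟩, hξT⟩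
      exact ⟨hξT, hξR⟩
    have hXr : ∀ α, restrict κ J (T R) (X α) :=
      fun α => ⟨hXsub α, hmono _ _ (hX α) inter_subset_left⟩
    have hd := hpl (R ∩ Iio κ.ord) hA X hXr
    apply hTR
    refine hmono _ _ hd.2 ?_
    intro ξ hξ
    obtain ⟨hξD, hξR⟩ := hξ
    have hg := hgD ξ hξD
    exact ⟨⟨g ξ, hg.1, ⟨hξR, lt_trans hg.1 (hDsub hξD)⟩, hg.2⟩, hξD, hξR⟩
  have lemL1 : ∀ S, J S → J (T S) :=
    fun S hS => lemL S (hmono _ _ hS inter_subset_right)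
  -- The iterated sets
  have hiter0 : iterD D g 0 = D := rfl
  have hiterSub : ∀ n, iterD D g (n + 1) ⊆ iterD D g n := fun n ξ hξ => hξ.1
  have hiterD : ∀ n, iterD D g n ⊆ D := by
    intro n
    induction n with
    | zero => exact fun ξ hξ => hξ
    | succ n ih => exact fun ξ hξ => ih hξ.1
  have c1 : ∀ n, J (iterD D g n \ iterD D g (n + 1)) := by
    intro n
    induction n with
    | zero =>
      have hTc : J (T Dᶜ) := by
        apply lemL
        refine hmono _ _ hempty ?_
        rintro ξ ⟨⟨hξD, _⟩, hξc⟩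
        exact hξc hξD
      refine hmono _ _ hTc ?_
      rintro ξ ⟨hξD, hξn⟩
      refine ⟨hξD, fun hc => hξn ⟨hξD, hc⟩⟩
    | succ n ih =>
      have := lemL1 _ ih
      refine hmono _ _ this ?_
      rintro ξ ⟨hξ1, hξn⟩
      refine ⟨hiterD _ (hiterSub _ hξ1), hξ1.2, fun hc => hξn ⟨hξ1, hc⟩⟩
  -- no ordinal survives all iterations
  have hDω : ∀ ξ : Ordinal.{0}, ¬ ∀ n, ξ ∈ iterD D g n := by
    intro ξ
    induction ξ using Ordinal.induction with
    | h ξ IH =>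
      intro hall
      have hξD : ξ ∈ D := hall 0
      have hg := hgD ξ hξD
      exact IH (g ξ) hg.1 (fun n => (hall (n + 1)).2)
  -- countable union
  set Y : Ordinal.{0} → Set Ordinal.{0} :=
    fun α => ⋃ (n : ℕ) (_ : (n : Ordinal.{0}) = α), (iterD D g n \ iterD D g (n + 1)) with hYdef
  have hYJ : ∀ α, J (Y α) := by
    intro α
    by_cases hex : ∃ n : ℕ, (n : Ordinal.{0}) = α
    · obtain ⟨n, rfl⟩ := hex
      refine hmono _ _ (c1 n) ?_
      intro ξ hξ
      simp only [hYdef, mem_iUnion] at hξ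
      obtain ⟨m, hm, hξ⟩ := hξ
      have : m = n := by exact_mod_cast hm
      subst this
      exact hξ
    · refine hmono _ _ hempty ?_
      intro ξ hξ
      simp only [hYdef, mem_iUnion] at hξ
      obtain ⟨m, hm, _⟩ := hξ
      exact absurd ⟨m, hm⟩ hex
  have hcard : (Ordinal.omega0 : Ordinal.{0}).card < κ := by
    rw [Ordinal.card_omega0]; exact hunc
  have hbig : J (⋃ α ∈ Iio (Ordinal.omega0 : Ordinal.{0}), Y α) :=
    hsmall _ hcard Y hYJ
  apply hD
  refine hmono _ _ hbig ?_
  intro ξ hξD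
  -- find least n with ξ ∉ iterD (n+1)
  have hexn : ∃ n, ξ ∉ iterD D g n := by
    by_contra hc
    push_neg at hc
    exact hDω ξ hc
  have hexm : ∃ m, ξ ∈ iterD D g m ∧ ξ ∉ iterD D g (m + 1) := by
    obtain ⟨n, hn⟩ := hexn
    induction n with
    | zero => exact absurd hξD hn
    | succ n ih =>
      by_cases hc : ξ ∈ iterD D g n
      · exact ⟨n, hc, hn⟩
      · exact ih hc
  obtain ⟨m, hm1, hm2⟩ := hexm
  refine mem_biUnion (Ordinal.nat_lt_omega0 m) ?_
  simp only [hYdef, mem_iUnion]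
  exact ⟨m, rfl, hm1, hm2⟩

end PaperIdeals
end

section
/- An ideal I on a regular uncountable cardinal κ is pleasant if and only if it is densely pleasant, i.e., for every A ∈ I⁺ there exists B ∈ (I↾A)⁺ such that I↾B is pleasant. -/
open Set

namespace PaperIdeals

/-- `I` is pleasant iff `I` is densely pleasant. -/
theorem stmt4 (κ : Cardinal.{0}) (hreg : κ.IsRegular) (hunc : Cardinal.aleph0 < κ)
    (J : Set Ordinal.{0} → Prop) (hJ : IsIdeal κ J) :
    Pleasant J ↔
      ∀ A, Pos κ J A → ∃ B, Pos κ (restrict κ J A) B ∧ Pleasant (restrict κ J B) := by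
  obtain ⟨hsub, hmono, hunion, hsing, hsmall⟩ := hJ
  constructor
  · intro hP A hA
    refine ⟨Iio κ.ord, ⟨subset_rfl, ?_⟩, ?_⟩
    · rintro ⟨-, h⟩
      exact hA.2 (hmono _ _ h (by intro x hx; exact ⟨hA.1 hx, hx⟩))
    · intro Q hQ X hX
      constructor
      · rintro ξ ⟨α, hα, hαQ, hξ⟩
        exact (hX α).1 hξ
      · apply hmono _ _ (hP (Q ∩ Iio κ.ord) hQ.2 (fun α => X α ∩ Iio κ.ord)
          (fun α => (hX α).2))
        rintro ξ ⟨⟨α, hα, hαQ, hξ⟩, hξκ⟩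
        exact ⟨α, hα, ⟨hαQ, hα.trans hξκ⟩, hξ, hξκ⟩
  · intro hdense Q hQ X hX
    by_contra hD
    have hDsub : diagU Q X ⊆ Iio κ.ord := by
      rintro ξ ⟨α, hα, hαQ, hξ⟩; exact hsub _ (hX α) hξ
    obtain ⟨B, hBpos, hBpl⟩ := hdense (diagU Q X) ⟨hDsub, hD⟩
    have h1 : restrict κ J B (diagU Q X) :=
      hBpl Q ⟨hsub _ hQ, hmono _ _ hQ inter_subset_left⟩
        X (fun α => ⟨hsub _ (hX α), hmono _ _ (hX α) inter_subset_left⟩)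
    have h2 := h1.2
    rw [inter_comm] at h2
    exact hBpos.2 ⟨hBpos.1, h2⟩

end PaperIdeals
end

section
/- An ideal I on κ is pleasant if and only if for every A ∈ I⁺ and every regressive I-small function f : A → κ, the image f[A] belongs to I⁺. -/
open Set

namespace PaperIdeals

/-- `I` is pleasant iff for every `A ∈ I⁺` and every regressive `I`-small
`f : A → κ`, the image `f[A]` is in `I⁺`. -/
theorem stmt5 (κ : Cardinal.{0}) (hreg : κ.IsRegular) (hunc : Cardinal.aleph0 < κ)
    (J : Set Ordinal.{0} → Prop) (hJ : IsIdeal κ J) :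
    Pleasant J ↔
      ∀ (A : Set Ordinal.{0}) (f : Ordinal.{0} → Ordinal.{0}), Pos κ J A →
        (∀ α ∈ A, f α < κ.ord) →
        (∀ α ∈ A, α ≠ 0 → f α < α) →
        (∀ ξ : Ordinal.{0}, J {α | α ∈ A ∧ f α = ξ}) →
        Pos κ J (f '' A) := by
  obtain ⟨hsub, hdown, hun, hsing, _⟩ := hJ
  constructor
  · intro hpl A f hA hflt hfreg hfsmall
    refine ⟨?_, ?_⟩
    · rintro _ ⟨α, hα, rfl⟩; exact hflt α hα
    · intro hIm
      apply hA.2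
      have h0 : (0 : Ordinal) < κ.ord := by
        rw [Cardinal.lt_ord]; simpa using hreg.pos
      have hD := hpl _ hIm (fun ξ => {α | α ∈ A ∧ f α = ξ}) hfsmall
      have hAsub : A ⊆ {0} ∪ diagU (f '' A) (fun ξ => {α | α ∈ A ∧ f α = ξ}) := by
        intro α hα
        by_cases h : α = 0
        · exact Or.inl h
        · exact Or.inr ⟨f α, hfreg α hα h, ⟨α, hα, rfl⟩, hα, rfl⟩
      exact hdown _ _ (hun _ _ (hsing 0 h0) hD) hAsub
  · intro H A hA X hX
    by_contra hD
    classical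
    set D := diagU A X with hDdef
    have hDsub : D ⊆ Iio κ.ord := by
      rintro ξ ⟨α, hαξ, hαA, hξ⟩
      exact hsub _ (hX α) hξ
    set f : Ordinal.{0} → Ordinal.{0} := fun ξ => if h : ξ ∈ D then h.choose else 0 with hf
    have hfspec : ∀ ξ ∈ D, f ξ < ξ ∧ f ξ ∈ A ∧ ξ ∈ X (f ξ) := by
      intro ξ hξ
      simp only [hf, dif_pos hξ]
      exact ⟨hξ.choose_spec.1, hξ.choose_spec.2.1, hξ.choose_spec.2.2⟩
    have hpos := H D f ⟨hDsub, hD⟩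
      (fun ξ hξ => lt_trans (hfspec ξ hξ).1 (hDsub hξ))
      (fun ξ hξ _ => (hfspec ξ hξ).1)
      (fun α => hdown (X α) _ (hX α)
        (fun ξ hξ => by
          rcases hξ with ⟨hξD, hfξ⟩
          have := (hfspec ξ hξD).2.2
          rwa [hfξ] at this))
    exact hpos.2 (hdown A _ hA (by rintro _ ⟨ξ, hξ, rfl⟩; exact (hfspec ξ hξ).2.1))

end PaperIdeals
end

section
/- If κ is a regular uncountable limit cardinal, then Węglorz's ideal J_κ is not prepleasant: there exist a set L ∈ J_κ and bounded sets (A_α)_{α<κ} such that L ∪ ∇_{α∈L} A_α ∉ J_κ. -/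
open Set

namespace PaperIdeals

/-- Auxiliary: the set `{c.ord + 1 : ℵ₀ ≤ c < κ}`. -/
def Lset' (κ : Cardinal.{0}) : Set Ordinal.{0} :=
  {x | ∃ c : Cardinal.{0}, Cardinal.aleph0 ≤ c ∧ c < κ ∧ x = c.ord + 1}

/-- Auxiliary: bounded sets used in the diagonal union. -/
def Aset' (κ : Cardinal.{0}) (α : Ordinal.{0}) : Set Ordinal.{0} :=
  {ξ | ∃ c : Cardinal.{0}, Cardinal.aleph0 ≤ c ∧ c < κ ∧ α = c.ord + 1 ∧ ξ < (Order.succ c).ord}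

set_option linter.deprecated false in
/-- For a regular uncountable limit cardinal `κ`, Węglorz's ideal `J_κ` is not
prepleasant. -/
theorem stmt7 (κ : Cardinal.{0}) (hreg : κ.IsRegular) (hunc : Cardinal.aleph0 < κ)
    (hlim : Order.IsSuccLimit κ) :
    ∃ (L : Set Ordinal.{0}) (A : Ordinal.{0} → Set Ordinal.{0}),
      Weglorz κ L ∧ (∀ α, BddIn κ (A α)) ∧
      (L ∪ diagU L A) ⊆ Iio κ.ord ∧ ¬ Weglorz κ (L ∪ diagU L A) := by
  classical
  have hκω : Cardinal.aleph0 ≤ κ := hunc.le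
  have hord : Order.IsSuccLimit κ.ord := Cardinal.isSuccLimit_ord hκω
  have hLsub : Lset' κ ⊆ Iio κ.ord := by
    rintro x ⟨c, hc1, hc2, rfl⟩
    have h1 : c.ord < κ.ord := Cardinal.ord_lt_ord.2 hc2
    rw [Ordinal.add_one_eq_succ]
    exact hord.succ_lt h1
  have hZsub : (Lset' κ ∪ diagU (Lset' κ) (Aset' κ)) ⊆ Iio κ.ord := by
    rintro x (hx | ⟨α, hαx, hαL, c, hc1, hc2, hc3, hc4⟩)
    · exact hLsub hx
    · have h1 : Order.succ c < κ := hlim.succ_lt hc2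
      exact lt_trans hc4 (Cardinal.ord_lt_ord.2 h1)
  refine ⟨Lset' κ, Aset' κ, ?_, ?_, hZsub, ?_⟩
  · -- Weglorz κ L
    refine ⟨hLsub, Ordinal.pred, 1, Cardinal.one_lt_aleph0.trans hunc, ?_, ?_⟩
    · rintro α ⟨c, hc1, hc2, rfl⟩ -
      rw [Ordinal.add_one_eq_succ, Ordinal.pred_succ]
      exact Order.lt_succ c.ord
    · intro ξ
      rw [Cardinal.lift_one]
      refine Cardinal.le_one_iff_subsingleton.2 ⟨?_⟩
      rintro ⟨α₁, ⟨c₁, h11, h12, rfl⟩, hp₁⟩ ⟨α₂, ⟨c₂, h21, h22, rfl⟩, hp₂⟩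
      rw [Ordinal.add_one_eq_succ, Ordinal.pred_succ] at hp₁ hp₂
      apply Subtype.ext
      simp only [hp₁, hp₂]
  · -- boundedness of the A's
    intro α
    by_cases h : ∃ c : Cardinal.{0}, Cardinal.aleph0 ≤ c ∧ c < κ ∧ α = c.ord + 1
    · obtain ⟨c, hc1, hc2, rfl⟩ := h
      refine ⟨(Order.succ c).ord, Cardinal.ord_lt_ord.2 (hlim.succ_lt hc2), ?_⟩
      rintro ξ ⟨c', h1', h2', h3', h4'⟩
      have hcc : c'.ord = c.ord := by
        rw [Ordinal.add_one_eq_succ, Ordinal.add_one_eq_succ] at h3'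
        exact Order.succ_injective h3'.symm
      have : c' = c := Cardinal.ord_injective hcc
      subst this
      exact h4'
    · refine ⟨1, ?_, ?_⟩
      · rw [Cardinal.lt_ord, Ordinal.card_one]
        exact Cardinal.one_lt_aleph0.trans hunc
      · rintro ξ ⟨c, h1, h2, h3, -⟩
        exact absurd ⟨c, h1, h2, h3⟩ h
  · -- the union is not in the Węglorz ideal
    rintro ⟨-, f, θ, hθκ, hregr, hfib⟩
    set Z : Set Ordinal.{0} := Lset' κ ∪ diagU (Lset' κ) (Aset' κ) with hZ
    set μ : Cardinal.{0} := max θ Cardinal.aleph0 with hμ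
    have hμinf : Cardinal.aleph0 ≤ μ := le_max_right _ _
    have hθμ : θ ≤ μ := le_max_left _ _
    have hμκ : μ < κ := max_lt hθκ hunc
    set ρ : Cardinal.{0} := Order.succ μ with hρ
    have hμρ : μ < ρ := Order.lt_succ μ
    have hρinf : Cardinal.aleph0 ≤ ρ := hμinf.trans hμρ.le
    have hρreg : ρ.IsRegular := Cardinal.isRegular_succ hμinf
    have hρord : Order.IsSuccLimit ρ.ord := Cardinal.isSuccLimit_ord hρinf
    have hμρord : μ.ord < ρ.ord := Cardinal.ord_lt_ord.2 hμρ
    -- the interval (μ.ord, ρ.ord) is contained in Z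
    have hint : ∀ α, μ.ord < α → α < ρ.ord → α ∈ Z := by
      intro α h1 h2
      have hle : μ.ord + 1 ≤ α := by
        rw [Ordinal.add_one_eq_succ]
        exact Order.succ_le_of_lt h1
      rcases hle.lt_or_eq with h3 | h3
      · exact Or.inr ⟨μ.ord + 1, h3, ⟨μ, hμinf, hμκ, rfl⟩, ⟨μ, hμinf, hμκ, rfl, h2⟩⟩
      · exact Or.inl ⟨μ, hμinf, hμκ, h3.symm⟩
    -- key boundedness lemma
    have key : ∀ β : Ordinal.{0}, β < ρ.ord →
        ∃ b, b < ρ.ord ∧ ∀ α, μ.ord < α → α < ρ.ord → f α ≤ β → α < b := by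
      intro β hβ
      set T : Set Ordinal.{0} := {α | μ.ord < α ∧ α < ρ.ord ∧ f α ≤ β} with hT
      have hTsub : T ⊆ Iio ρ.ord := fun α hα => hα.2.1
      haveI hsm0 : Small.{0} ↥(Iio ρ.ord) := Ordinal.bddAbove_iff_small.mp bddAbove_Iio
      haveI hsm : Small.{0} ↥T := small_subset hTsub
      have hβ1 : β + 1 < ρ.ord := by
        rw [Ordinal.add_one_eq_succ]; exact hρord.succ_lt hβ
      have hmkT : (Cardinal.mk ↥T) ≤ Cardinal.lift.{1} μ := by
        have h1 : T ⊆ ⋃ ξ : ↥(Iio (β + 1)), {α | α ∈ Z ∧ f α = (ξ : Ordinal.{0})} := by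
          intro α hα
          refine mem_iUnion.2 ⟨⟨f α, ?_⟩, ⟨hint α hα.1 hα.2.1, rfl⟩⟩
          rw [mem_Iio, Ordinal.add_one_eq_succ, Order.lt_succ_iff]
          exact hα.2.2
        calc Cardinal.mk ↥T ≤ Cardinal.mk ↥(⋃ ξ : ↥(Iio (β + 1)),
              {α | α ∈ Z ∧ f α = (ξ : Ordinal.{0})}) := Cardinal.mk_le_mk_of_subset h1
          _ ≤ Cardinal.sum (fun ξ : ↥(Iio (β + 1)) =>
              Cardinal.mk ↥{α | α ∈ Z ∧ f α = (ξ : Ordinal.{0})}) :=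
            Cardinal.mk_iUnion_le_sum_mk
          _ ≤ Cardinal.sum (fun _ : ↥(Iio (β + 1)) => Cardinal.lift.{1} θ) :=
            Cardinal.sum_le_sum _ _ (fun ξ => hfib (ξ : Ordinal.{0}))
          _ = Cardinal.mk ↥(Iio (β + 1)) * Cardinal.lift.{1} θ := Cardinal.sum_const' _ _
          _ ≤ Cardinal.lift.{1} μ * Cardinal.lift.{1} μ := by
              refine mul_le_mul' ?_ (Cardinal.lift_le.2 hθμ)
              rw [Ordinal.mk_Iio_ordinal]
              apply Cardinal.lift_le.2
              have hcard : (β + 1).card < ρ := Cardinal.lt_ord.1 hβ1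
              exact Order.lt_succ_iff.1 hcard
          _ = Cardinal.lift.{1} μ := by
              rw [← Cardinal.lift_mul, Cardinal.mul_eq_self hμinf]
      set F : Shrink.{0} ↥T → Ordinal.{0} :=
        fun i => (((equivShrink ↥T).symm i : ↥T) : Ordinal.{0}) with hF
      have hFlt : ∀ i, F i < ρ.ord := fun i => ((equivShrink ↥T).symm i).2.2.1
      have hcardS : Cardinal.mk (Shrink.{0} ↥T) < ρ := by
        have h2 : Cardinal.lift.{1} (Cardinal.mk (Shrink.{0} ↥T)) = Cardinal.mk ↥T :=
          Cardinal.lift_mk_shrink'' ↥T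
        rw [← Cardinal.lift_lt.{0, 1}, h2]
        exact lt_of_le_of_lt hmkT (Cardinal.lift_lt.2 hμρ)
      have hsup : iSup F < ρ.ord := by
        refine Ordinal.iSup_lt_ord ?_ hFlt
        rwa [hρreg.cof_eq]
      refine ⟨iSup F + 1, ?_, ?_⟩
      · rw [Ordinal.add_one_eq_succ]; exact hρord.succ_lt hsup
      · intro α hα1 hα2 hα3
        have hαT : α ∈ T := ⟨hα1, hα2, hα3⟩
        have h5 : α ≤ iSup F := by
          have h6 := Ordinal.le_iSup F (equivShrink ↥T ⟨α, hαT⟩)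
          simpa [hF] using h6
        rw [Ordinal.add_one_eq_succ, Order.lt_succ_iff]
        exact h5
    choose! b hb1 hb2 using key
    set g : ℕ → Ordinal.{0} := fun n => Nat.rec (μ.ord + 1) (fun _ ih => b ih) n with hg
    have hg0 : g 0 = μ.ord + 1 := rfl
    have hgs : ∀ n, g (n + 1) = b (g n) := fun n => rfl
    have hglt : ∀ n, g n < ρ.ord := by
      intro n
      induction n with
      | zero =>
        rw [hg0, Ordinal.add_one_eq_succ]
        exact hρord.succ_lt hμρord
      | succ n ih =>
        rw [hgs]
        exact hb1 _ ih
    have hgstep : ∀ n α, μ.ord < α → α < ρ.ord → f α ≤ g n → α < g (n + 1) := by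
      intro n α h1 h2 h3
      rw [hgs]
      exact (hb2 _ (hglt n)) α h1 h2 h3
    set βω : Ordinal.{0} := iSup g with hβω
    have hβωρ : βω < ρ.ord := by
      refine Ordinal.iSup_lt_ord ?_ hglt
      rw [hρreg.cof_eq, Cardinal.mk_nat]
      exact lt_of_le_of_lt hμinf hμρ
    have hβωμ : μ.ord < βω := by
      have h1 : g 0 ≤ βω := Ordinal.le_iSup g 0
      rw [hg0] at h1
      exact lt_of_lt_of_le (lt_of_lt_of_le (Order.lt_succ μ.ord)
        (by rw [Ordinal.add_one_eq_succ])) h1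
    have hβωZ : βω ∈ Z := hint βω hβωμ hβωρ
    have hβωne : βω ≠ 0 := by
      intro h
      rw [h] at hβωμ
      exact absurd hβωμ (by simp)
    have hfβω : f βω < βω := hregr βω hβωZ hβωne
    obtain ⟨n, hn⟩ : ∃ n, f βω < g n := Ordinal.lt_iSup_iff.1 hfβω
    have hcontra : βω < g (n + 1) := hgstep n βω hβωμ hβωρ hn.le
    exact absurd (Ordinal.le_iSup g (n + 1)) (not_le.2 hcontra)

end PaperIdeals
end

section
/- If an ideal I on κ is a p-point, then I is prepleasant if and only if I is pleasant. -/
open Set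

namespace PaperIdeals

/-- A bounded subset of `κ` is in any `<κ`-complete ideal. -/
lemma bddin_mem_ideal {κ : Cardinal.{0}} {J : Set Ordinal.{0} → Prop} (hJ : IsIdeal κ J)
    (hpos : 0 < κ.ord) {X : Set Ordinal.{0}} (hX : BddIn κ X) : J X := by
  obtain ⟨θ, hθ, hsub⟩ := hX
  obtain ⟨_, hmono, _, hsing, hsmall⟩ := hJ
  have hcard : θ.card < κ := Cardinal.lt_ord.mp hθ
  have hempty : J (∅ : Set Ordinal.{0}) :=
    hmono _ _ (hsing 0 hpos) (empty_subset _)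
  have h := hsmall θ hcard (fun β => if β < κ.ord then {β} else ∅) (by
    intro β
    by_cases hb : β < κ.ord
    · simpa [hb] using hsing β hb
    · simpa [hb] using hempty)
  refine hmono _ _ h ?_
  intro x hx
  simp only [mem_iUnion, mem_Iio, exists_prop]
  exact ⟨x, hsub hx, by rw [if_pos (lt_trans (hsub hx) hθ)]; exact rfl⟩

/-- If `I` is a p-point then `I` is prepleasant iff `I` is pleasant. -/
theorem stmt8 (κ : Cardinal.{0}) (hreg : κ.IsRegular) (hunc : Cardinal.aleph0 < κ)
    (J : Set Ordinal.{0} → Prop) (hJ : IsIdeal κ J) (hprop : Proper κ J)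
    (hpp : PPoint κ J) :
    Prepleasant κ J ↔ Pleasant J := by
  have hpos : (0 : Ordinal.{0}) < κ.ord := by
    rw [Cardinal.lt_ord]
    simpa using lt_trans Cardinal.aleph0_pos hunc
  obtain ⟨hsub, hmono, hunion, hsing, hsmall⟩ := hJ
  have hJ' : IsIdeal κ J := ⟨hsub, hmono, hunion, hsing, hsmall⟩
  constructor
  · -- prepleasant → pleasant, via p-point
    intro hpre A hA X hX
    classical
    -- define the selection function
    set f : Ordinal.{0} → Ordinal.{0} := fun ξ =>
      if h : ({α | α ∈ A ∧ α < ξ ∧ ξ ∈ X α} : Set Ordinal.{0}).Nonempty then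
        sInf {α | α ∈ A ∧ α < ξ ∧ ξ ∈ X α} else ξ with hf
    have hfspec : ∀ ξ, ξ ∈ diagU A X →
        f ξ ∈ A ∧ f ξ < ξ ∧ ξ ∈ X (f ξ) := by
      intro ξ hξ
      obtain ⟨α, hαξ, hαA, hξX⟩ := hξ
      have hne : ({α | α ∈ A ∧ α < ξ ∧ ξ ∈ X α} : Set Ordinal.{0}).Nonempty :=
        ⟨α, hαA, hαξ, hξX⟩
      have : f ξ ∈ {α | α ∈ A ∧ α < ξ ∧ ξ ∈ X α} := by
        rw [hf]; simp only [hne, dif_pos]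
        exact csInf_mem hne
      exact this
    -- f is J-small
    have hfibers : ∀ ξ : Ordinal.{0}, J {α | α < κ.ord ∧ f α = ξ} := by
      intro ξ₀
      have hsubfib : {α | α < κ.ord ∧ f α = ξ₀} ⊆ X ξ₀ ∪ ({ξ₀} ∩ Iio κ.ord) := by
        intro α ⟨hα, hfα⟩
        by_cases h : ({β | β ∈ A ∧ β < α ∧ α ∈ X β} : Set Ordinal.{0}).Nonempty
        · left
          have hm : f α ∈ {β | β ∈ A ∧ β < α ∧ α ∈ X β} := by
            rw [hf]; simp only [h, dif_pos]
            exact csInf_mem h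
          rw [hfα] at hm
          exact hm.2.2
        · right
          have : f α = α := by simp only [hf]; rw [dif_neg h]
          rw [this] at hfα
          exact ⟨hfα, hfα ▸ hα⟩
      refine hmono _ _ ?_ hsubfib
      refine hunion _ _ (hX ξ₀) ?_
      by_cases hξ : ξ₀ < κ.ord
      · exact hmono _ _ (hsing ξ₀ hξ) inter_subset_left
      · exact hmono _ _ (hsing 0 hpos) (by
          intro x ⟨hx1, hx2⟩
          exact absurd (hx1 ▸ hx2) hξ)
    obtain ⟨Y, hYdual, hYbdd⟩ := hpp f hfibers
    -- the part of diagU A X inside Y is contained in a diagonal union of bounded sets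
    set B : Ordinal.{0} → Set Ordinal.{0} := fun α => {ξ | ξ ∈ Y ∧ f ξ = α} with hB
    have hBbdd : ∀ α, BddIn κ (B α) := fun α => hYbdd α
    have hkey : diagU A X ∩ Y ⊆ diagU A B := by
      intro ξ ⟨hξd, hξY⟩
      obtain ⟨hfA, hflt, hfX⟩ := hfspec ξ hξd
      exact ⟨f ξ, hflt, hfA, hξY, rfl⟩
    have h1 : J (diagU A X ∩ Y) := hmono _ _ (hpre A hA B hBbdd) hkey
    have h2 : J (diagU A X \ Y) := by
      refine hmono _ _ hYdual.2 ?_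
      intro ξ ⟨hξd, hξY⟩
      obtain ⟨α, _, _, hξX⟩ := hξd
      exact ⟨hsub _ (hX α) hξX, hξY⟩
    have := hunion _ _ h1 h2
    refine hmono _ _ this ?_
    intro ξ hξ
    by_cases h : ξ ∈ Y
    · exact Or.inl ⟨hξ, h⟩
    · exact Or.inr ⟨hξ, h⟩
  · -- pleasant → prepleasant
    intro hpl Q hQ B hB
    exact hpl Q hQ B (fun α => bddin_mem_ideal hJ' hpos (hB α))

end PaperIdeals
end

section
/- If I is a quasinormal prepleasant ideal on κ, then I is pleasant, and hence normal. -/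
open Set

namespace PaperIdeals

lemma succ_card_lt {κ : Cardinal.{0}} (hunc : Cardinal.aleph0 < κ) {α : Ordinal.{0}}
    (h : α < κ.ord) : (α + 1).card < κ := by
  rw [Ordinal.add_one_eq_succ, Ordinal.card_succ]
  exact Cardinal.add_lt_of_lt hunc.le (Cardinal.lt_ord.mp h)
    (lt_trans Cardinal.one_lt_aleph0 hunc)

lemma ideal_empty {κ : Cardinal.{0}} {J : Set Ordinal.{0} → Prop} (hJ : IsIdeal κ J)
    (hunc : Cardinal.aleph0 < κ) : J ∅ := by
  have h0 : (0 : Ordinal) < κ.ord := by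
    rw [Cardinal.lt_ord]
    simpa using lt_trans Cardinal.aleph0_pos hunc
  exact hJ.2.1 _ _ (hJ.2.2.2.1 0 h0) (empty_subset _)

lemma ideal_Iio {κ : Cardinal.{0}} {J : Set Ordinal.{0} → Prop} (hJ : IsIdeal κ J)
    (hunc : Cardinal.aleph0 < κ) {θ : Ordinal.{0}} (hθ : θ < κ.ord) : J (Iio θ) := by
  classical
  set F : Ordinal.{0} → Set Ordinal.{0} := fun α => if α < θ then {α} else ∅ with hF
  have hFJ : ∀ α, J (F α) := by
    intro α
    by_cases h : α < θ
    · simpa [F, h] using hJ.2.2.2.1 α (lt_trans h hθ)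
    · simpa [F, h] using ideal_empty hJ hunc
  have hU : J (⋃ α ∈ Iio θ, F α) :=
    hJ.2.2.2.2 θ (Cardinal.lt_ord.mp hθ) F hFJ
  refine hJ.2.1 _ _ hU ?_
  intro x hx
  exact mem_biUnion hx (by simp [F, show x < θ from hx])

lemma dual_unbounded {κ : Cardinal.{0}} {J : Set Ordinal.{0} → Prop} (hJ : IsIdeal κ J)
    (hunc : Cardinal.aleph0 < κ) (hprop : Proper κ J) {Q : Set Ordinal.{0}}
    (hQ : Dual κ J Q) : ∀ η < κ.ord, ∃ γ ∈ Q, η < γ := by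
  intro η hη
  by_contra hcon
  push_neg at hcon
  have hη1 : η + 1 < κ.ord := Cardinal.lt_ord.mpr (succ_card_lt hunc hη)
  have hηlt : η < η + 1 := by
    rw [Ordinal.add_one_eq_succ]; exact Order.lt_succ η
  have hsub : Iio κ.ord ⊆ (Iio κ.ord \ Q) ∪ Iio (η + 1) := by
    intro x hx
    by_cases h : x ∈ Q
    · exact Or.inr (lt_of_le_of_lt (hcon x h) hηlt)
    · exact Or.inl ⟨hx, h⟩
  exact hprop (hJ.2.1 _ _ (hJ.2.2.1 _ _ hQ.2 (ideal_Iio hJ hunc hη1)) hsub)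

/-- A quasinormal prepleasant ideal is pleasant, and therefore normal. -/
theorem stmt9 (κ : Cardinal.{0}) (hreg : κ.IsRegular) (hunc : Cardinal.aleph0 < κ)
    (J : Set Ordinal.{0} → Prop) (hJ : IsIdeal κ J) (hprop : Proper κ J)
    (hq : Quasinormal κ J) (hpre : Prepleasant κ J) :
    Pleasant J ∧ Normal κ J := by
  classical
  obtain ⟨hsub, hmono, hunion, hsing, hcomp⟩ := hJ
  have hJ' : IsIdeal κ J := ⟨hsub, hmono, hunion, hsing, hcomp⟩
  have hJempty : J ∅ := ideal_empty hJ' hunc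
  have hpl : Pleasant J := by
    intro A hA X hX
    set Z : Ordinal.{0} → Set Ordinal.{0} := fun β => if β ∈ A then X β else ∅ with hZdef
    have hZJ : ∀ β, J (Z β) := by
      intro β
      by_cases h : β ∈ A
      · simpa [Z, h] using hX β
      · simpa [Z, h] using hJempty
    set Y : Ordinal.{0} → Set Ordinal.{0} := fun α =>
      if α < κ.ord then ⋃ β ∈ Iio (α + 1), Z β else ∅ with hYdef
    have hYJ : ∀ α, J (Y α) := by
      intro α
      by_cases h : α < κ.ord
      · simpa [Y, h] using hcomp (α + 1) (succ_card_lt hunc h) Z hZJ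
      · simpa [Y, h] using hJempty
    obtain ⟨Q, hQdual, hD⟩ := hq Y hYJ
    have hQunb := dual_unbounded hJ' hunc hprop hQdual
    set B : Ordinal.{0} → Set Ordinal.{0} := fun β =>
      if β < κ.ord then X β ∩ {ξ | ∀ γ ∈ Q, β ≤ γ → ξ ≤ γ} else ∅ with hBdef
    have hBbdd : ∀ β, BddIn κ (B β) := by
      intro β
      by_cases h : β < κ.ord
      · obtain ⟨γ, hγQ, hβγ⟩ := hQunb β h
        have hγκ : γ < κ.ord := hQdual.1 hγQ
        refine ⟨γ + 1, Cardinal.lt_ord.mpr (succ_card_lt hunc hγκ), ?_⟩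
        intro ξ hξ
        simp only [B, if_pos h, mem_inter_iff, mem_setOf_eq] at hξ
        have : ξ ≤ γ := hξ.2 γ hγQ hβγ.le
        have hγlt : γ < γ + 1 := by
          rw [Ordinal.add_one_eq_succ]; exact Order.lt_succ γ
        exact lt_of_le_of_lt this hγlt
      · refine ⟨1, ?_, ?_⟩
        · rw [Cardinal.lt_ord]
          simpa using lt_trans Cardinal.one_lt_aleph0 hunc
        · simp [B, h]
    have hE : J (diagU A B) := hpre A hA B hBbdd
    have hcover : diagU A X ⊆ diagU Q Y ∪ diagU A B := by
      rintro ξ ⟨β, hβξ, hβA, hξX⟩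
      have hξκ : ξ < κ.ord := hsub _ (hX β) hξX
      have hβκ : β < κ.ord := hβξ.trans hξκ
      by_cases hc : ∃ γ ∈ Q, β ≤ γ ∧ γ < ξ
      · obtain ⟨γ, hγQ, hβγ, hγξ⟩ := hc
        left
        refine ⟨γ, hγξ, hγQ, ?_⟩
        have hγκ : γ < κ.ord := hγξ.trans hξκ
        simp only [Y, if_pos hγκ]
        have hβmem : β ∈ Iio (γ + 1) := by
          have : γ < γ + 1 := by
            rw [Ordinal.add_one_eq_succ]; exact Order.lt_succ γ
          exact lt_of_le_of_lt hβγ this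
        exact mem_biUnion hβmem (by simp only [Z, if_pos hβA]; exact hξX)
      · right
        refine ⟨β, hβξ, hβA, ?_⟩
        simp only [B, if_pos hβκ, mem_inter_iff, mem_setOf_eq]
        refine ⟨hξX, fun γ hγQ hβγ => ?_⟩
        by_contra hlt
        exact hc ⟨γ, hγQ, hβγ, lt_of_not_ge hlt⟩
    exact hmono _ _ (hunion _ _ hD hE) hcover
  refine ⟨hpl, ?_⟩
  intro X hX
  obtain ⟨Q, hQdual, hD⟩ := hq X hX
  have hN : J (diagU (Iio κ.ord \ Q) X) := hpl _ hQdual.2 X hX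
  have hcover : diagU (Iio κ.ord) X ⊆ diagU Q X ∪ diagU (Iio κ.ord \ Q) X := by
    rintro ξ ⟨α, hαξ, hακ, hξ⟩
    by_cases h : α ∈ Q
    · exact Or.inl ⟨α, hαξ, h, hξ⟩
    · exact Or.inr ⟨α, hαξ, ⟨hακ, h⟩, hξ⟩
  exact hmono _ _ (hunion _ _ hD hN) hcover

end PaperIdeals
end

section
/- If I is a quasinormal ideal on κ contained in the nonstationary ideal NS_κ, then I is normal. -/
open Set

namespace PaperIdeals

section StmtTenAux

variable {κ : Cardinal.{0}} {J : Set Ordinal.{0} → Prop}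

lemma ord_pos10 (hunc : Cardinal.aleph0 < κ) : (0 : Ordinal.{0}) < κ.ord :=
  Cardinal.lt_ord.2 (by simpa using (Cardinal.aleph0_pos.trans hunc))

lemma J_empty10 (hJ : IsIdeal κ J) (hunc : Cardinal.aleph0 < κ) : J ∅ :=
  hJ.2.1 {0} ∅ (hJ.2.2.2.1 0 (ord_pos10 hunc)) (empty_subset _)

/-- One quasinormality step with strict descent of witnesses. -/
lemma step10 (hJ : IsIdeal κ J) (hunc : Cardinal.aleph0 < κ)
    (hsub : ∀ X, J X → NS κ X) (hq : Quasinormal κ J)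
    (A : Set Ordinal.{0}) (X : Ordinal.{0} → Set Ordinal.{0})
    (hA : J A) (hX : ∀ α, J (X α)) :
    ∃ (A' : Set Ordinal.{0}) (X' : Ordinal.{0} → Set Ordinal.{0}) (G : Set Ordinal.{0}),
      J A' ∧ (∀ α, J (X' α)) ∧ J G ∧
      ∀ ξ β, β ∈ A → β < ξ → ξ ∈ X β → ξ ∉ G →
        ∃ β', β' ∈ A' ∧ β' < β ∧ ξ ∈ X' β' := by
  classical
  obtain ⟨-, C, hC, hAC⟩ := hsub A hA
  obtain ⟨hCsub, hCunb, hCcl⟩ := hC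
  have hκ0 : (0 : Ordinal.{0}) < κ.ord := ord_pos10 hunc
  have hCne : C.Nonempty := by
    obtain ⟨β, hβ, -⟩ := hCunb 0 hκ0; exact ⟨β, hβ⟩
  set m := sInf C with hm
  have hmC : m ∈ C := csInf_mem hCne
  have hJe : J ∅ := J_empty10 hJ hunc
  set Y : Ordinal.{0} → Set Ordinal.{0} := fun β => if β ∈ A then X β else ∅ with hYdef
  have hJY : ∀ β, J (Y β) := by
    intro β
    by_cases h : β ∈ A
    · simpa [hYdef, h] using hX β
    · simpa [hYdef, h] using hJe
  set nxt : Ordinal.{0} → Ordinal.{0} := fun γ => sInf {c | c ∈ C ∧ γ < c} with hnxt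
  have hnxtlt : ∀ γ, nxt γ < κ.ord := by
    intro γ
    by_cases h : {c | c ∈ C ∧ γ < c}.Nonempty
    · exact hCsub (csInf_mem h).1
    · rw [Set.not_nonempty_iff_eq_empty] at h
      simp only [hnxt, h, Ordinal.sInf_empty]
      exact hκ0
  set X' : Ordinal.{0} → Set Ordinal.{0} := fun γ => ⋃ β ∈ Iio (nxt γ), Y β with hX'def
  have hJX' : ∀ γ, J (X' γ) :=
    fun γ => hJ.2.2.2.2 _ (Cardinal.lt_ord.1 (hnxtlt γ)) Y hJY
  have hm1 : m + 1 < κ.ord := by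
    have := (Cardinal.isSuccLimit_ord (le_of_lt hunc)).succ_lt (hCsub hmC)
    rwa [Ordinal.add_one_eq_succ]
  set B : Set Ordinal.{0} := ⋃ β ∈ Iio (m + 1), Y β with hBdef
  have hJB : J B := hJ.2.2.2.2 _ (Cardinal.lt_ord.1 hm1) Y hJY
  obtain ⟨Q, ⟨hQsub, hQc⟩, hQdiag⟩ := hq X' hJX'
  refine ⟨C \ Q, X', B ∪ diagU Q X', ?_, hJX', hJ.2.2.1 _ _ hJB hQdiag, ?_⟩
  · exact hJ.2.1 _ _ hQc (fun x hx => ⟨hCsub hx.1, hx.2⟩)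
  · intro ξ β hβA hβξ hξX hξG
    have hξB : ξ ∉ B := fun h => hξG (Or.inl h)
    have hξD : ξ ∉ diagU Q X' := fun h => hξG (Or.inr h)
    have hβκ : β < κ.ord := hJ.1 A hA hβA
    have hmβ : m < β := by
      by_contra h
      push_neg at h
      refine hξB ?_
      have : ξ ∈ Y β := by simp [hYdef, hβA, hξX]
      exact mem_biUnion (by simpa [mem_Iio] using Order.lt_succ_of_le h) this
    set S := C ∩ Iic β with hSdef
    have hSne : S.Nonempty := ⟨m, hmC, le_of_lt hmβ⟩
    have hSbdd : BddAbove S := ⟨β, fun x hx => hx.2⟩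
    set c := sSup S with hcdef
    have hcβ : c ≤ β := csSup_le hSne (fun x hx => hx.2)
    have hcκ : c < κ.ord := lt_of_le_of_lt hcβ hβκ
    have hcC : c ∈ C := by
      by_cases h : c ∈ S
      · exact h.1
      · have hlt : ∀ α < c, ∃ e ∈ C, α < e ∧ e < c := by
          intro α hα
          obtain ⟨e, heS, hαe⟩ := exists_lt_of_lt_csSup hSne hα
          refine ⟨e, heS.1, hαe, lt_of_le_of_ne (le_csSup hSbdd heS) ?_⟩
          intro hh; exact h (hh ▸ heS)
        have hmS : m ∈ S := ⟨hmC, le_of_lt hmβ⟩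
        have hmc : m < c :=
          lt_of_le_of_ne (le_csSup hSbdd hmS) (fun h' => h (h' ▸ hmS))
        have hclim : Order.IsSuccLimit c := by
          rw [Ordinal.isSuccLimit_iff]
          constructor
          · exact fun h0 => absurd (h0 ▸ hmc) (not_lt_of_ge (zero_le (a := m)))
          · refine Order.isSuccPrelimit_of_succ_lt fun a ha => ?_
            obtain ⟨e, heC, hae, hec⟩ := hlt a ha
            exact lt_of_le_of_lt (Order.succ_le_of_lt hae) hec
        exact hCcl c hcκ hclim hlt
    have hclt : c < β := by
      refine lt_of_le_of_ne hcβ (fun h => ?_)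
      have : β ∈ A ∩ C := ⟨hβA, h ▸ hcC⟩
      rw [hAC] at this
      exact this
    have hnxtc : β < nxt c := by
      by_contra h
      push_neg at h
      have hne : {x | x ∈ C ∧ c < x}.Nonempty := by
        obtain ⟨e, heC, hce⟩ := hCunb c hcκ
        exact ⟨e, heC, hce⟩
      have hmem := csInf_mem hne
      have : nxt c ∈ S := ⟨hmem.1, h⟩
      exact absurd (le_csSup hSbdd this) (not_le.2 hmem.2)
    have hξX' : ξ ∈ X' c := by
      have hYβ : ξ ∈ Y β := by simp [hYdef, hβA, hξX]
      exact mem_biUnion (by simpa [mem_Iio] using hnxtc) hYβ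
    by_cases hcQ : c ∈ Q
    · exact absurd ⟨c, lt_trans hclt hβξ, hcQ, hξX'⟩ hξD
    · exact ⟨c, ⟨hcC, hcQ⟩, hclt, hξX'⟩

lemma pleasant10 (hJ : IsIdeal κ J) (hunc : Cardinal.aleph0 < κ)
    (hsub : ∀ X, J X → NS κ X) (hq : Quasinormal κ J)
    (A : Set Ordinal.{0}) (X : Ordinal.{0} → Set Ordinal.{0})
    (hA : J A) (hX : ∀ α, J (X α)) : J (diagU A X) := by
  classical
  have hJe : J ∅ := J_empty10 hJ hunc
  let T := {p : Set Ordinal.{0} × (Ordinal.{0} → Set Ordinal.{0}) // J p.1 ∧ ∀ α, J (p.2 α)}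
  have hstep : ∀ t : T, ∃ (t' : T) (G : Set Ordinal.{0}), J G ∧
      ∀ ξ β, β ∈ t.1.1 → β < ξ → ξ ∈ t.1.2 β → ξ ∉ G →
        ∃ β', β' ∈ t'.1.1 ∧ β' < β ∧ ξ ∈ t'.1.2 β' := by
    rintro ⟨⟨A₀, X₀⟩, hA₀, hX₀⟩
    obtain ⟨A', X', G, h1, h2, h3, h4⟩ := step10 hJ hunc hsub hq A₀ X₀ hA₀ hX₀
    exact ⟨⟨⟨A', X'⟩, h1, h2⟩, G, h3, h4⟩
  choose f g hg hdesc using hstep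
  let t0 : T := ⟨⟨A, X⟩, hA, hX⟩
  let seq : ℕ → T := fun n => f^[n] t0
  have hseq : ∀ n, seq (n + 1) = f (seq n) := fun n => Function.iterate_succ_apply' f n t0
  have hseq0 : seq 0 = t0 := rfl
  have hGU : J (⋃ n : ℕ, g (seq n)) := by
    set Z : Ordinal.{0} → Set Ordinal.{0} :=
      fun α => ⋃ (n : ℕ) (_ : (n : Ordinal.{0}) = α), g (seq n) with hZdef
    have hJZ : ∀ α, J (Z α) := by
      intro α
      by_cases h : ∃ n : ℕ, (n : Ordinal.{0}) = α
      · obtain ⟨n, rfl⟩ := h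
        have hZn : Z (n : Ordinal.{0}) = g (seq n) := by
          ext ξ
          simp only [hZdef, mem_iUnion]
          constructor
          · rintro ⟨k, hk, hξ⟩
            rwa [(Nat.cast_inj.1 hk : k = n)] at hξ
          · exact fun hξ => ⟨n, rfl, hξ⟩
        rw [hZn]; exact hg _
      · have hZn : Z α = ∅ := by
          ext ξ
          simp only [hZdef, mem_iUnion, mem_empty_iff_false, iff_false, not_exists]
          exact fun n hn _ => h ⟨n, hn⟩
        rw [hZn]; exact hJe
    have hωκ : (Ordinal.omega0).card < κ := by simpa using hunc
    have hU := hJ.2.2.2.2 Ordinal.omega0 hωκ Z hJZ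
    have heq : (⋃ α ∈ Iio Ordinal.omega0, Z α) = ⋃ n : ℕ, g (seq n) := by
      ext ξ
      simp only [mem_iUnion, mem_Iio, hZdef]
      constructor
      · rintro ⟨α, hα, n, rfl, hξ⟩
        exact ⟨n, hξ⟩
      · rintro ⟨n, hξ⟩
        exact ⟨(n : Ordinal.{0}), Ordinal.nat_lt_omega0 n, n, rfl, hξ⟩
    rwa [heq] at hU
  refine hJ.2.1 _ _ hGU ?_
  intro ξ hξ
  by_contra hξG
  simp only [mem_iUnion] at hξG
  push_neg at hξG
  have key : ∀ n (b : Ordinal.{0}), (b ∈ (seq n).1.1 ∧ b < ξ ∧ ξ ∈ (seq n).1.2 b) →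
      ∃ b', (b' ∈ (seq (n + 1)).1.1 ∧ b' < ξ ∧ ξ ∈ (seq (n + 1)).1.2 b') ∧ b' < b := by
    rintro n b ⟨h1, h2, h3⟩
    obtain ⟨b', hb1, hb2, hb3⟩ := hdesc (seq n) ξ b h1 h2 h3 (hξG n)
    exact ⟨b', ⟨by rw [hseq n]; exact hb1, lt_trans hb2 h2, by rw [hseq n]; exact hb3⟩, hb2⟩
  choose F hF1 hF2 using key
  obtain ⟨b0, hb0ξ, hb0A, hb0X⟩ := hξ
  let W : ∀ n : ℕ, {b : Ordinal.{0} // b ∈ (seq n).1.1 ∧ b < ξ ∧ ξ ∈ (seq n).1.2 b} :=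
    fun n => Nat.rec ⟨b0, hb0A, hb0ξ, hb0X⟩ (fun k p => ⟨F k p.1 p.2, hF1 k p.1 p.2⟩) n
  have hdec : ∀ n, (W (n + 1)).1 < (W n).1 := fun n => hF2 n (W n).1 (W n).2
  obtain ⟨mv, ⟨n, hn⟩, hmin⟩ :=
    Ordinal.lt_wf.has_min (Set.range fun n => (W n).1) ⟨(W 0).1, 0, rfl⟩
  exact hmin _ ⟨n + 1, rfl⟩ (hn ▸ hdec n)

end StmtTenAux

/-- A quasinormal ideal contained in `NS κ` is normal. -/
theorem stmt10 (κ : Cardinal.{0}) (hreg : κ.IsRegular) (hunc : Cardinal.aleph0 < κ)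
    (J : Set Ordinal.{0} → Prop) (hJ : IsIdeal κ J) (hprop : Proper κ J)
    (hsub : ∀ X, J X → NS κ X) (hq : Quasinormal κ J) :
    Normal κ J := by
  intro X hX
  obtain ⟨Q, ⟨hQsub, hQc⟩, hQdiag⟩ := hq X hX
  have hP := pleasant10 hJ hunc hsub hq (Iio κ.ord \ Q) X hQc hX
  have hcont : diagU (Iio κ.ord) X ⊆ diagU Q X ∪ diagU (Iio κ.ord \ Q) X := by
    rintro ξ ⟨α, hαξ, hακ, hξX⟩
    by_cases h : α ∈ Q
    · exact Or.inl ⟨α, hαξ, h, hξX⟩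
    · exact Or.inr ⟨α, hαξ, ⟨hακ, h⟩, hξX⟩
  exact hJ.2.1 _ _ (hJ.2.2.1 _ _ hQdiag hP) hcont

end PaperIdeals
end

section
/- If I is an ideal on κ with L = {λ+1 : λ a limit ordinal < κ} ∈ I, then every nonstationary subset of κ belongs to the pleasant closure P(I) of I; hence P(I) extends NS_κ and is normal. -/
open Set

namespace PaperIdeals

lemma my_ord_pos {κ : Cardinal.{0}} (hunc : Cardinal.aleph0 < κ) : (0 : Ordinal.{0}) < κ.ord := by
  rw [Cardinal.lt_ord]
  simpa using lt_trans (by simp [Cardinal.aleph0_pos]) hunc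

lemma bdd_mem {κ : Cardinal.{0}} (hunc : Cardinal.aleph0 < κ)
    {K : Set Ordinal.{0} → Prop} (hK : IsIdeal κ K) {X : Set Ordinal.{0}}
    (hX : BddIn κ X) : K X := by
  classical
  obtain ⟨h1, hsub, hun, hsing, hcomp⟩ := hK
  obtain ⟨θ, hθ, hXθ⟩ := hX
  set F : Ordinal.{0} → Set Ordinal.{0} := fun α => if α ∈ X then {α} else ∅ with hF
  have hFK : ∀ α, K (F α) := by
    intro α
    by_cases h : α ∈ X
    · simpa [hF, h] using hsing α (lt_trans (hXθ h) hθ)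
    · simpa [hF, h] using hsub {0} ∅ (hsing 0 (my_ord_pos hunc)) (empty_subset _)
  have hbig := hcomp θ (Cardinal.lt_ord.mp hθ) F hFK
  refine hsub _ _ hbig ?_
  intro x hx
  have hxθ : x ∈ Iio θ := hXθ hx
  exact mem_biUnion hxθ (by simp [hF, hx])

/-- Every club contains unboundedly many of its limit points. -/
lemma club_limitpt {κ : Cardinal.{0}} (hreg : κ.IsRegular) (hunc : Cardinal.aleph0 < κ)
    {C : Set Ordinal.{0}} (hC : IsClubIn κ C) :
    ∀ α < κ.ord, ∃ δ, δ ∈ C ∧ Order.IsSuccLimit δ ∧ (∀ β < δ, ∃ c ∈ C, β < c ∧ c < δ) ∧ α < δ ∧ δ < κ.ord := by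
  obtain ⟨hCsub, hCunb, hCcl⟩ := hC
  intro α hα
  set next : Ordinal.{0} → Ordinal.{0} :=
    fun β => if h : β < κ.ord then (hCunb β h).choose else 0 with hnextdef
  have hnext : ∀ β, β < κ.ord → next β ∈ C ∧ β < next β := by
    intro β h
    have := (hCunb β h).choose_spec
    simp only [hnextdef, dif_pos h]
    exact ⟨this.1, this.2⟩
  set f : ℕ → Ordinal.{0} := fun n => Nat.rec (next α) (fun _ ih => next ih) n with hfdef
  have hf0 : f 0 = next α := rfl
  have hfs : ∀ n, f (n + 1) = next (f n) := fun n => rfl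
  have hfC : ∀ n, f n ∈ C ∧ f n < κ.ord := by
    intro n
    induction n with
    | zero =>
      have := hnext α hα
      exact ⟨this.1, hCsub this.1⟩
    | succ n ih =>
      have := hnext (f n) ih.2
      rw [hfs]
      exact ⟨this.1, hCsub this.1⟩
  have hmono : ∀ n, f n < f (n + 1) := by
    intro n
    rw [hfs]
    exact (hnext (f n) (hfC n).2).2
  set δ : Ordinal.{0} := ⨆ n, f n with hδdef
  have hδlt : δ < κ.ord := by
    refine Ordinal.iSup_lt_ord ?_ (fun n => (hfC n).2)
    rw [Cardinal.mk_nat, hreg.cof_eq]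
    exact hunc
  have hbdd : BddAbove (Set.range f) := ⟨κ.ord, by rintro _ ⟨n, rfl⟩; exact (hfC n).2.le⟩
  have hle : ∀ n, f n ≤ δ := fun n => le_ciSup hbdd n
  have hflt : ∀ n, f n < δ := fun n => lt_of_lt_of_le (hmono n) (hle (n + 1))
  have hcof : ∀ β < δ, ∃ c ∈ C, β < c ∧ c < δ := by
    intro β hβ
    rw [hδdef, Ordinal.lt_iSup_iff] at hβ
    obtain ⟨n, hn⟩ := hβ
    exact ⟨f n, (hfC n).1, hn, hflt n⟩
  have hδlim : Order.IsSuccLimit δ := by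
    rw [Ordinal.isSuccLimit_iff, Order.isSuccPrelimit_iff_succ_lt]
    constructor
    · intro h0
      exact absurd (hflt 0) (by simp [h0])
    · intro a ha
      obtain ⟨c, _, hac, hcδ⟩ := hcof a ha
      exact lt_of_le_of_lt (Order.succ_le_of_lt hac) hcδ
  have hαδ : α < δ := lt_of_lt_of_le (hnext α hα).2 (by rw [← hf0]; exact hle 0)
  exact ⟨δ, hCcl δ hδlt hδlim hcof, hδlim, hcof, hαδ, hδlt⟩

/-- Any pleasant ideal containing `L` contains all nonstationary sets. -/
lemma ns_mem {κ : Cardinal.{0}} (hreg : κ.IsRegular) (hunc : Cardinal.aleph0 < κ)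
    {K : Set Ordinal.{0} → Prop} (hK : IsIdeal κ K) (hPl : Pleasant K) (hL : K (LSet κ))
    {A : Set Ordinal.{0}} (hA : NS κ A) : K A := by
  obtain ⟨hAsub, C, hC, hAC⟩ := hA
  have hACdisj : ∀ x, x ∈ A → x ∉ C := by
    intro x hx hxC
    have : x ∈ A ∩ C := ⟨hx, hxC⟩
    rw [hAC] at this
    exact this
  set C' : Set Ordinal.{0} :=
    {δ | δ ∈ C ∧ Order.IsSuccLimit δ ∧ ∀ β < δ, ∃ c ∈ C, β < c ∧ c < δ} with hC'def
  have hC'unb : ∀ α < κ.ord, ∃ δ ∈ C', α < δ := by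
    intro α hα
    obtain ⟨δ, h1, h2, h3, h4, _⟩ := club_limitpt hreg hunc hC α hα
    exact ⟨δ, ⟨h1, h2, h3⟩, h4⟩
  have hC'sub : C' ⊆ Iio κ.ord := fun δ hδ => hC.1 hδ.1
  obtain ⟨c0, hc0C', hc0pos⟩ := hC'unb 0 (my_ord_pos hunc)
  have hκlim : Order.IsSuccLimit κ.ord := Cardinal.isSuccLimit_ord hreg.aleph0_le
  -- the family
  set X : Ordinal.{0} → Set Ordinal.{0} :=
    fun β => {ξ | ξ ∈ A ∧ sSup (C' ∩ Iio ξ) + 1 = β} with hXdef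
  have hXK : ∀ β, K (X β) := by
    intro β
    refine bdd_mem hunc hK ?_
    rcases Set.eq_empty_or_nonempty (X β) with h | ⟨ξ0, hξ0⟩
    · exact ⟨0, my_ord_pos hunc, by rw [h]; exact empty_subset _⟩
    · set lam := sSup (C' ∩ Iio ξ0) with hlam
      have hξ0κ : ξ0 < κ.ord := hAsub hξ0.1
      have hlamκ : lam < κ.ord := by
        refine lt_of_le_of_lt (csSup_le' ?_) hξ0κ
        rintro b ⟨_, hb⟩
        exact hb.le
      obtain ⟨b, hbC', hlamb⟩ := hC'unb lam hlamκ
      refine ⟨b + 1, hκlim.succ_lt (hC'sub hbC'), ?_⟩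
      intro ξ hξ
      have hlameq : sSup (C' ∩ Iio ξ) = lam := by
        have h2 : sSup (C' ∩ Iio ξ) + 1 = lam + 1 := by rw [hξ.2, ← hξ0.2]
        rwa [Ordinal.add_one_eq_succ, Ordinal.add_one_eq_succ, Order.succ_eq_succ_iff] at h2
      by_contra hbξ
      simp only [mem_Iio, not_lt] at hbξ
      have hbξ' : b < ξ := lt_of_lt_of_le (Order.lt_succ b) hbξ
      have : b ≤ sSup (C' ∩ Iio ξ) :=
        le_csSup ⟨ξ, fun y hy => hy.2.le⟩ ⟨hbC', hbξ'⟩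
      rw [hlameq] at this
      exact absurd hlamb (not_lt.mpr this)
  -- decomposition
  have hdecomp : A ⊆ (A ∩ Iio (c0 + 1)) ∪ (A ∩ LSet κ) ∪ diagU (LSet κ) X := by
    intro ξ hξ
    have hξκ : ξ < κ.ord := hAsub hξ
    by_cases hc0ξ : ξ ≤ c0
    · exact Or.inl (Or.inl ⟨hξ, lt_of_le_of_lt hc0ξ (Order.lt_succ c0)⟩)
    push_neg at hc0ξ
    set lam := sSup (C' ∩ Iio ξ) with hlam
    have hne : (C' ∩ Iio ξ).Nonempty := ⟨c0, hc0C', hc0ξ⟩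
    have hbdd : BddAbove (C' ∩ Iio ξ) := ⟨ξ, fun y hy => hy.2.le⟩
    have hlamle : lam ≤ ξ := csSup_le' (fun b hb => hb.2.le)
    have hlamκ : lam < κ.ord := lt_of_le_of_lt hlamle hξκ
    -- lam is a limit ordinal in C
    have hkey : lam ∈ C ∧ Order.IsSuccLimit lam := by
      by_cases hmem : lam ∈ C' ∩ Iio ξ
      · exact ⟨hmem.1.1, hmem.1.2.1⟩
      · have hcof : ∀ β < lam, ∃ c, c ∈ C' ∩ Iio ξ ∧ β < c ∧ c < lam := by
          intro β hβ
          rw [hlam, lt_csSup_iff hbdd hne] at hβ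
          obtain ⟨c, hc, hβc⟩ := hβ
          have hclam : c ≤ lam := le_csSup hbdd hc
          have : c ≠ lam := fun h => hmem (h ▸ hc)
          exact ⟨c, hc, hβc, lt_of_le_of_ne hclam this⟩
        have hlim : Order.IsSuccLimit lam := by
          rw [Ordinal.isSuccLimit_iff, Order.isSuccPrelimit_iff_succ_lt]
          constructor
          · intro h0
            obtain ⟨c, hc⟩ := hne
            have hclam : c ≤ lam := le_csSup hbdd hc
            rw [h0] at hclam
            exact (Ordinal.isSuccLimit_iff.mp hc.1.2.1).1 (le_antisymm hclam (zero_le (a := c)))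
          · intro a ha
            obtain ⟨c, _, hac, hcl⟩ := hcof a ha
            exact lt_of_le_of_lt (Order.succ_le_of_lt hac) hcl
        refine ⟨hC.2.2 lam hlamκ hlim ?_, hlim⟩
        intro β hβ
        obtain ⟨c, hc, h1, h2⟩ := hcof β hβ
        exact ⟨c, hc.1.1, h1, h2⟩
    have hlamξ : lam < ξ := lt_of_le_of_ne hlamle (fun h => hACdisj ξ hξ (h ▸ hkey.1))
    have hlamsucc : lam + 1 ≤ ξ := Order.succ_le_of_lt hlamξ
    have hlamsκ : lam + 1 < κ.ord := lt_of_le_of_lt hlamsucc hξκ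
    rcases lt_or_eq_of_le hlamsucc with hlt | heq
    · exact Or.inr ⟨lam + 1, hlt, ⟨lam, hkey.2, rfl, hlamsκ⟩, hξ, rfl⟩
    · exact Or.inl (Or.inr ⟨hξ, lam, hkey.2, heq.symm, hξκ⟩)
  -- conclude
  obtain ⟨h1, hsub, hun, hsing, hcomp⟩ := hK
  have hK1 : K (A ∩ Iio (c0 + 1)) :=
    bdd_mem hunc ⟨h1, hsub, hun, hsing, hcomp⟩
      ⟨c0 + 1, hκlim.succ_lt (hC'sub hc0C'), fun x hx => hx.2⟩
  have hK2 : K (A ∩ LSet κ) := hsub _ _ hL (fun x hx => hx.2)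
  have hK3 : K (diagU (LSet κ) X) := hPl _ hL X hXK
  exact hsub _ _ (hun _ _ (hun _ _ hK1 hK2) hK3) hdecomp

/-- The set of successor ordinals below `κ` is nonstationary. -/
lemma succ_ns {κ : Cardinal.{0}} (hreg : κ.IsRegular) (hunc : Cardinal.aleph0 < κ) :
    NS κ {ξ : Ordinal.{0} | ξ < κ.ord ∧ ∃ γ, ξ = γ + 1} := by
  refine ⟨fun x hx => hx.1, {δ | δ < κ.ord ∧ Order.IsSuccLimit δ}, ⟨fun x hx => hx.1, ?_, ?_⟩, ?_⟩
  · intro α hα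
    refine ⟨α + Ordinal.omega0, ⟨?_, Ordinal.isSuccLimit_add α Ordinal.isSuccLimit_omega0⟩, ?_⟩
    · rw [Cardinal.lt_ord, Ordinal.card_add]
      refine Cardinal.add_lt_of_lt hreg.aleph0_le (Cardinal.lt_ord.mp hα) ?_
      simpa using hunc
    · simpa using Ordinal.omega0_pos
  · intro δ hδ hlim _
    exact ⟨hδ, hlim⟩
  · rw [Set.eq_empty_iff_forall_notMem]
    rintro x ⟨⟨_, γ, rfl⟩, _, hlim⟩
    have := hlim.succ_lt (by rw [Ordinal.add_one_eq_succ]; exact Order.lt_succ γ)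
    rw [Ordinal.add_one_eq_succ] at this
    exact absurd this (lt_irrefl _)

/-- If `L ∈ I`, then every nonstationary set belongs to the pleasant closure
`P(I)`; hence `P(I)` extends `NS κ` and is normal. -/
theorem stmt12 (κ : Cardinal.{0}) (hreg : κ.IsRegular) (hunc : Cardinal.aleph0 < κ)
    (J : Set Ordinal.{0} → Prop) (hJ : IsIdeal κ J) (hL : J (LSet κ)) :
    (∀ A, NS κ A → PClosure κ J A) ∧ Normal κ (PClosure κ J) := by
  have hpart1 : ∀ A, NS κ A → PClosure κ J A := by
    intro A hA K hK hPl hJK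
    exact ns_mem hreg hunc hK hPl (hJK _ hL) hA
  refine ⟨hpart1, ?_⟩
  intro X hX
  intro K hK hPl hJK
  have hXK : ∀ α, K (X α) := fun α => hX α K hK hPl hJK
  have hXsub : ∀ α, X α ⊆ Iio κ.ord := fun α => hK.1 _ (hXK α)
  set S : Set Ordinal.{0} := {ξ | ξ < κ.ord ∧ ∃ γ, ξ = γ + 1} with hSdef
  have hSK : K S := ns_mem hreg hunc hK hPl (hJK _ hL) (succ_ns hreg hunc)
  set Y : Ordinal.{0} → Set Ordinal.{0} :=
    fun β => if h : β < κ.ord then ⋃ α ∈ Iio β, X α else ∅ with hYdef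
  obtain ⟨h1, hsub, hun, hsing, hcomp⟩ := hK
  have hYK : ∀ β, K (Y β) := by
    intro β
    by_cases h : β < κ.ord
    · simp only [hYdef, dif_pos h]
      exact hcomp β (Cardinal.lt_ord.mp h) X hXK
    · simp only [hYdef, dif_neg h]
      exact hsub {0} ∅ (hsing 0 (my_ord_pos hunc)) (empty_subset _)
  have hdec : diagU (Iio κ.ord) X ⊆ diagU S Y ∪ S := by
    rintro ξ ⟨α, hαξ, _, hξX⟩
    have hξκ : ξ < κ.ord := hXsub α hξX
    have hsucc : α + 1 ≤ ξ := Order.succ_le_of_lt hαξ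
    rcases lt_or_eq_of_le hsucc with hlt | heq
    · refine Or.inl ⟨α + 1, hlt, ⟨lt_trans hlt hξκ, α, rfl⟩, ?_⟩
      simp only [hYdef, dif_pos (lt_trans hlt hξκ)]
      exact mem_biUnion (Order.lt_succ α) hξX
    · exact Or.inr ⟨hξκ, α, heq.symm⟩
  exact hsub _ _ (hun _ _ (hPl _ hSK Y hYK) hSK) hdec

end PaperIdeals
end

section
/- An ideal I on κ is normal if and only if I is pleasant and L = {λ+1 : λ a limit ordinal < κ} ∈ I. -/
open Set

namespace PaperIdeals

/-- `I` is normal iff `I` is pleasant and `L ∈ I`. -/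
theorem stmt13 (κ : Cardinal.{0}) (hreg : κ.IsRegular) (hunc : Cardinal.aleph0 < κ)
    (J : Set Ordinal.{0} → Prop) (hJ : IsIdeal κ J) (hprop : Proper κ J) :
    Normal κ J ↔ (Pleasant J ∧ J (LSet κ)) := by
  classical
  obtain ⟨hsub, hmono, hun, hsing, hsmall⟩ := hJ
  have hκlim : Order.IsSuccLimit κ.ord := Cardinal.isSuccLimit_ord (le_of_lt hunc)
  constructor
  · intro hN
    constructor
    · intro A hA X hX
      have hY : ∀ α, J (if α ∈ A then X α else ∅) := by
        intro α
        by_cases h : α ∈ A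
        · simpa [h] using hX α
        · simpa [h] using hmono _ _ (hsing 0 hκlim.pos) (empty_subset _)
      refine hmono _ _ (hN _ hY) ?_
      rintro ξ ⟨α, hαξ, hαA, hξ⟩
      exact ⟨α, hαξ, hsub A hA hαA, by simp [hαA, hξ]⟩
    · set X : Ordinal.{0} → Set Ordinal.{0} :=
        fun lam => if Order.IsSuccLimit lam ∧ lam + 1 < κ.ord then {lam + 1} else ∅ with hXdef
      have hX : ∀ α, J (X α) := by
        intro α
        by_cases h : Order.IsSuccLimit α ∧ α + 1 < κ.ord
        · show J (if Order.IsSuccLimit α ∧ α + 1 < κ.ord then {α + 1} else ∅)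
          rw [if_pos h]; exact hsing (α + 1) h.2
        · show J (if Order.IsSuccLimit α ∧ α + 1 < κ.ord then {α + 1} else ∅)
          rw [if_neg h]; exact hmono _ _ (hsing 0 hκlim.pos) (empty_subset _)
      refine hmono _ _ (hN X hX) ?_
      rintro ξ ⟨lam, hlim, rfl, hlt⟩
      refine ⟨lam, lt_add_one lam, lt_trans (lt_add_one lam) hlt, ?_⟩
      show lam + 1 ∈ (if Order.IsSuccLimit lam ∧ lam + 1 < κ.ord then ({lam + 1} : Set Ordinal.{0}) else ∅)
      rw [if_pos ⟨hlim, hlt⟩]; exact mem_singleton _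
  · rintro ⟨hpl, hL⟩ X hX
    set U0 : Set Ordinal.{0} := ⋃ α ∈ Iio (Ordinal.omega0), X α with hU0def
    have hU0 : J U0 := by
      refine hsmall _ ?_ X hX
      rw [Ordinal.card_omega0]; exact hunc
    set Y : Ordinal.{0} → Set Ordinal.{0} :=
      fun β => if β < κ.ord then ⋃ γ ∈ Iio (β + Ordinal.omega0), X γ else ∅ with hYdef
    have hY : ∀ β, J (Y β) := by
      intro β
      by_cases h : β < κ.ord
      · have hcard : (β + Ordinal.omega0).card < κ := by
          rw [Ordinal.card_add, Ordinal.card_omega0]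
          exact Cardinal.add_lt_of_lt (le_of_lt hunc) (Cardinal.lt_ord.mp h) hunc
        simpa [hYdef, h] using hsmall _ hcard X hX
      · simpa [hYdef, h] using hmono _ _ (hsing 0 hκlim.pos) (empty_subset _)
    have hDiag : J (diagU (LSet κ) Y) := hpl _ hL Y hY
    refine hmono (diagU (LSet κ) Y ∪ LSet κ ∪ U0) _ (hun _ _ (hun _ _ hDiag hL) hU0) ?_
    rintro ξ ⟨α, hαξ, hακ, hξX⟩
    have hξκ : ξ < κ.ord := hsub _ (hX α) hξX
    by_cases hα : α < Ordinal.omega0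
    · exact Or.inr (mem_biUnion hα hξX)
    · push_neg at hα
      set lam : Ordinal.{0} := Ordinal.omega0 * (α / Ordinal.omega0) with hlamdef
      have hq : 0 < α / Ordinal.omega0 := by
        rw [Ordinal.lt_div Ordinal.omega0_ne_zero]
        simpa using hα
      have hlim : Order.IsSuccLimit lam := Ordinal.isSuccLimit_mul_left Ordinal.isSuccLimit_omega0 hq
      have hlamα : lam ≤ α := Ordinal.mul_div_le α Ordinal.omega0
      have hαlt : α < lam + Ordinal.omega0 := by
        conv_lhs => rw [← Ordinal.div_add_mod α Ordinal.omega0]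
        exact (add_lt_add_iff_left _).mpr (Ordinal.mod_lt α Ordinal.omega0_ne_zero)
      have h1 : lam + 1 ≤ ξ := by
        have : lam < ξ := lt_of_le_of_lt hlamα hαξ
        exact Order.add_one_le_of_lt this
      rcases lt_or_eq_of_le h1 with h | h
      · refine Or.inl (Or.inl ⟨lam + 1, h, ⟨lam, hlim, rfl, lt_trans h hξκ⟩, ?_⟩)
        have hβκ : lam + 1 < κ.ord := lt_trans h hξκ
        have hαmem : α < lam + 1 + Ordinal.omega0 := by
          rwa [add_assoc, Ordinal.one_add_omega0]
        simp only [hYdef, if_pos hβκ]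
        exact mem_biUnion hαmem hξX
      · exact Or.inl (Or.inr ⟨lam, hlim, h.symm, hξκ⟩)

end PaperIdeals
end

section
/- An ideal I on κ is normal if and only if I is pleasant and the set of limit ordinals below κ belongs to the dual filter I*. -/
open Set

namespace PaperIdeals

/-- `I` is normal iff `I` is pleasant and the set of limit ordinals below `κ`
is in the dual filter `I*`. -/
theorem stmt14 (κ : Cardinal.{0}) (hreg : κ.IsRegular) (hunc : Cardinal.aleph0 < κ)
    (J : Set Ordinal.{0} → Prop) (hJ : IsIdeal κ J) (hprop : Proper κ J) :
    Normal κ J ↔ (Pleasant J ∧ Dual κ J {α | α < κ.ord ∧ Order.IsSuccLimit α}) := by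
  classical
  obtain ⟨hsub, hmono, hunion, hsing, hsmall⟩ := hJ
  have hord : Order.IsSuccLimit κ.ord := Cardinal.isSuccLimit_ord hreg.aleph0_le
  have hempty : J ∅ := hmono {0} ∅ (hsing 0 hord.pos) (empty_subset _)
  constructor
  · intro hnorm
    constructor
    · -- Pleasant
      intro A hA X hX
      have hA' := hsub A hA
      refine hmono (diagU (Iio κ.ord) (fun α => if α ∈ A then X α else ∅)) _ ?_ ?_
      · refine hnorm _ (fun α => ?_)
        by_cases h : α ∈ A
        · simpa [h] using hX α
        · simpa [h] using hempty
      · rintro ξ ⟨α, hαξ, hαA, hξ⟩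
        exact ⟨α, hαξ, hA' hαA, by simp [hαA, hξ]⟩
    · refine ⟨fun α hα => hα.1, ?_⟩
      have hdiag := hnorm (fun α => if α + 1 < κ.ord then {α + 1} else ∅)
        (fun α => by
          by_cases h : α + 1 < κ.ord
          · rw [if_pos h]; exact hsing (α + 1) h
          · rw [if_neg h]; exact hempty)
      refine hmono _ _ (hunion _ _ (hsing 0 hord.pos) hdiag) ?_
      rintro ξ ⟨hξκ, hξ⟩
      simp only [mem_setOf_eq, not_and] at hξ
      rcases Ordinal.zero_or_succ_or_isSuccLimit ξ with h0 | ⟨α, rfl⟩ | hlim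
      · exact Or.inl (by simp [h0])
      · have hα : α + 1 < κ.ord := by rwa [Ordinal.add_one_eq_succ]
        refine Or.inr ⟨α, Order.lt_succ α, lt_trans (Order.lt_succ α) hξκ, ?_⟩
        dsimp only; rw [if_pos hα]
        simp [Order.succ_eq_add_one]
      · exact absurd (hξ hξκ hlim) (fun h => h)
  · rintro ⟨hpl, _, hN⟩
    intro X hX
    set N : Set Ordinal.{0} := Iio κ.ord \ {α | α < κ.ord ∧ Order.IsSuccLimit α} with hNdef
    set Y : Ordinal.{0} → Set Ordinal.{0} := fun β => X (Ordinal.pred β) with hYdef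
    have hYJ : ∀ β, J (Y β) := fun β => hX _
    refine hmono (N ∪ (diagU N X ∪ diagU N Y)) _
      (hunion _ _ hN (hunion _ _ (hpl N hN X hX) (hpl N hN Y hYJ))) ?_
    rintro ξ ⟨α, hαξ, hακ, hξX⟩
    have hξκ : ξ < κ.ord := hsub (X α) (hX α) hξX
    by_cases hlim : Order.IsSuccLimit α
    · by_cases heq : ξ = α + 1
      · left
        refine ⟨hξκ, ?_⟩
        simp only [mem_setOf_eq, not_and]
        intro _ hl
        rw [heq, Ordinal.add_one_eq_succ] at hl
        exact (Order.not_isSuccLimit_succ α) hl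
      · right; right
        have hle : α + 1 ≤ ξ := by
          rw [Ordinal.add_one_eq_succ]; exact Order.succ_le_of_lt hαξ
        have hlt : α + 1 < ξ := lt_of_le_of_ne hle (fun h => heq h.symm)
        refine ⟨α + 1, hlt, ⟨lt_trans hlt hξκ, ?_⟩, ?_⟩
        · simp only [mem_setOf_eq, not_and]
          intro _
          rw [Ordinal.add_one_eq_succ]
          exact Order.not_isSuccLimit_succ α
        · show ξ ∈ X (Ordinal.pred (α + 1))
          rw [Ordinal.add_one_eq_succ, Ordinal.pred_succ]
          exact hξX
    · right; left
      exact ⟨α, hαξ, ⟨hακ, fun h => hlim h.2⟩, hξX⟩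

end PaperIdeals
end

section
/- If I is a pleasant ideal on κ and there exists a thin set S ∈ I*, then I is quasinormal, and hence normal. -/
open Set

namespace PaperIdeals

/-- If `I` is pleasant and there is a thin set `S ∈ I*`, then `I` is
quasinormal, and hence normal. -/
theorem stmt15 (κ : Cardinal.{0}) (hreg : κ.IsRegular) (hunc : Cardinal.aleph0 < κ)
    (J : Set Ordinal.{0} → Prop) (hJ : IsIdeal κ J) (hprop : Proper κ J)
    (hpl : Pleasant J) (S : Set Ordinal.{0}) (hthin : ∀ α ∈ S, α + 1 ∉ S)
    (hS : Dual κ J S) :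
    Quasinormal κ J ∧ Normal κ J := by
  have hlim : Order.IsSuccLimit κ.ord := Cardinal.isSuccLimit_ord hunc.le
  have hzero : (0 : Ordinal) < κ.ord := hlim.pos
  have hempty : J (∅ : Set Ordinal) := hJ.2.1 _ _ (hJ.2.2.2.1 0 hzero) (empty_subset _)
  set T : Set Ordinal := Iio κ.ord \ S with hT_def
  have hT : J T := hS.2
  -- the key lemma: for any family in J, the diagonal union over S is in J
  have key : ∀ X : Ordinal.{0} → Set Ordinal.{0}, (∀ α, J (X α)) → J (diagU S X) := by
    intro X hX
    set Y : Ordinal.{0} → Set Ordinal.{0} :=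
      fun β => {ξ | ∃ α, α + 1 = β ∧ α ∈ S ∧ ξ ∈ X α} with hY_def
    have hY : ∀ β, J (Y β) := by
      intro β
      by_cases h : ∃ α, α + 1 = β ∧ α ∈ S
      · obtain ⟨α, hαβ, -⟩ := h
        refine hJ.2.1 _ _ (hX α) ?_
        intro ξ hξ
        obtain ⟨α', hα'β, -, hξ'⟩ := hξ
        have : α' = α := by
          have : α' + 1 = α + 1 := hα'β.trans hαβ.symm
          exact Order.succ_injective (by rwa [Ordinal.add_one_eq_succ, Ordinal.add_one_eq_succ] at this)
        rwa [← this]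
      · have : Y β = ∅ := by
          ext ξ
          simp only [hY_def, mem_setOf_eq, mem_empty_iff_false, iff_false]
          rintro ⟨α, hαβ, hαS, -⟩
          exact h ⟨α, hαβ, hαS⟩
        rw [this]; exact hempty
    have hsub : diagU S X ⊆ diagU T Y ∪ T := by
      rintro ξ ⟨α, hαξ, hαS, hξX⟩
      have hακ : α < κ.ord := hS.1 hαS
      have hβκ : α + 1 < κ.ord := hlim.succ_lt hακ
      have hβT : α + 1 ∈ T := ⟨hβκ, hthin α hαS⟩
      rcases lt_or_eq_of_le (Order.add_one_le_iff.mpr hαξ) with hlt | heq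
      · exact Or.inl ⟨α + 1, hlt, hβT, ⟨α, rfl, hαS, hξX⟩⟩
      · exact Or.inr (heq ▸ hβT)
    exact hJ.2.1 _ _ (hJ.2.2.1 _ _ (hpl T hT Y hY) hT) hsub
  constructor
  · intro X hX
    exact ⟨S, hS, key X hX⟩
  · intro X hX
    have hsub : diagU (Iio κ.ord) X ⊆ diagU S X ∪ diagU T X := by
      rintro ξ ⟨α, hαξ, hακ, hξX⟩
      by_cases hαS : α ∈ S
      · exact Or.inl ⟨α, hαξ, hαS, hξX⟩
      · exact Or.inr ⟨α, hαξ, ⟨hακ, hαS⟩, hξX⟩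
    exact hJ.2.1 _ _ (hJ.2.2.1 _ _ (key X hX) (hpl T hT X hX)) hsub

end PaperIdeals
end
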